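/- arXiv:2601.20074 — 8 statements merged into one kernel-verified Lean document; each statement's English description precedes it below -/
import Mathlib

section
/- Let n ≥ 1 and let M be a matrix in Matrix (Fin n) (Fin n) ℂ. Then the trace of M is zero if and only if there exists a unitary matrix U ∈ Matrix.unitaryGroup (Fin n) ℂ such that every diagonal entry of Uᴴ * M * U is zero (equivalently, there exists an orthonormal basis of ℂⁿ in which the matrix presentation of M has all diagonal entries equal to zero). -/
open Matrix Complex Finset
open scoped InnerProductSpace

local notation "conj'" => starRingEnd ℂ

lemma key (n : ℕ) : ∀ (A : Matrix (Fin n) (Fin n) ℂ) (t : Fin n → ℝ),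
    (∀ i, 0 ≤ t i) → (∑ i, t i = 1) →
    ∃ x : Fin n → ℂ, (∑ k, conj' (x k) * x k) = 1 ∧
      (∑ k, ∑ l, conj' (x k) * A k l * x l) = ∑ i, (t i : ℂ) * A i i := by
  induction n with
  | zero => intro A t _ h1; simp at h1
  | succ n IH =>
    intro A t ht h1
    set S : ℝ := ∑ i : Fin n, t i.castSucc with hS
    have h1' : S + t (Fin.last n) = 1 := by
      rw [hS, ← Fin.sum_univ_castSucc]; exact h1
    rcases eq_or_lt_of_le (show (0:ℝ) ≤ S from Finset.sum_nonneg fun i _ => ht _) with hS0 | hSpos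
    · -- S = 0 : take last basis vector
      have hu : t (Fin.last n) = 1 := by linarith
      have hti : ∀ i : Fin n, t i.castSucc = 0 := by
        intro i
        have := (Finset.sum_eq_zero_iff_of_nonneg (fun i _ => ht i.castSucc)).mp hS0.symm
        exact this i (Finset.mem_univ i)
      refine ⟨fun k => if k = Fin.last n then 1 else 0, ?_, ?_⟩
      · simp [Fin.sum_univ_castSucc, (Fin.castSucc_lt_last _).ne]
      · rw [Fin.sum_univ_castSucc]
        have : ∀ i : Fin n, ∑ l, conj' (if i.castSucc = Fin.last n then (1:ℂ) else 0) * A i.castSucc l * (if l = Fin.last n then 1 else 0) = 0 := by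
          intro i
          simp [(Fin.castSucc_lt_last i).ne]
        rw [Finset.sum_congr rfl fun i _ => this i]
        simp [Fin.sum_univ_castSucc, (Fin.castSucc_lt_last _).ne, hti, hu]
    · -- main case
      set A' : Matrix (Fin n) (Fin n) ℂ := A.submatrix Fin.castSucc Fin.castSucc with hA'
      set t' : Fin n → ℝ := fun i => t i.castSucc / S with ht'
      obtain ⟨y, hy1, hy2⟩ := IH A' t' (fun i => div_nonneg (ht _) hSpos.le)
        (by rw [ht', ← Finset.sum_div, ← hS, div_self hSpos.ne'])
      set c : ℂ := ∑ i, (t' i : ℂ) * A' i i with hc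
      set lamA : ℂ := A (Fin.last n) (Fin.last n) with hlam
      set u : ℝ := t (Fin.last n) with hu
      have hRHS : (∑ i, (t i : ℂ) * A i i) = (S:ℂ) * c + (u:ℂ) * lamA := by
        rw [Fin.sum_univ_castSucc, hc, Finset.mul_sum]
        congr 1
        refine Finset.sum_congr rfl fun i _ => ?_
        have : (t i.castSucc : ℂ) = (S:ℂ) * (t' i : ℂ) := by
          rw [ht']
          have hSC : (S:ℂ) ≠ 0 := by exact_mod_cast hSpos.ne'
          push_cast
          rw [mul_comm, div_mul_cancel₀ _ hSC]
        rw [this, hA']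
        simp [Matrix.submatrix_apply]
        ring
      have expand : ∀ v : Fin (n+1) → ℂ,
          (∑ k, ∑ l, conj' (v k) * A k l * v l) =
            (∑ k : Fin n, ∑ l : Fin n, conj' (v k.castSucc) * A' k l * v l.castSucc)
            + (∑ k : Fin n, conj' (v k.castSucc) * A k.castSucc (Fin.last n)) * v (Fin.last n)
            + conj' (v (Fin.last n)) * (∑ l : Fin n, A (Fin.last n) l.castSucc * v l.castSucc)
            + conj' (v (Fin.last n)) * lamA * v (Fin.last n) := by
        intro v
        simp only [Fin.sum_univ_castSucc, Finset.sum_add_distrib, hA', Matrix.submatrix_apply,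
          Finset.sum_mul, Finset.mul_sum, hlam]
        ring_nf
        congr 1
        exact Finset.sum_congr rfl fun _ _ => by ring
      set b₁ : ℂ := ∑ k : Fin n, conj' (y k) * A k.castSucc (Fin.last n) with hb₁
      set b₂ : ℂ := ∑ l : Fin n, A (Fin.last n) l.castSucc * y l with hb₂
      set w : ℂ := lamA - c with hw
      have hSu : (S:ℂ) + (u:ℂ) = 1 := by exact_mod_cast h1'
      by_cases hw0 : w = 0
      · refine ⟨Fin.snoc y 0, ?_, ?_⟩
        · rw [Fin.sum_univ_castSucc]
          simp [Fin.snoc_castSucc, Fin.snoc_last, hy1]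
        · rw [expand (Fin.snoc y 0)]
          simp only [Fin.snoc_castSucc, Fin.snoc_last, map_zero, mul_zero, zero_mul, add_zero]
          rw [hy2, hRHS]
          linear_combination (-c) * hSu - (u:ℂ) * hw0
      · -- find the phase φ₀
        have hcont : Continuous fun φ : ℝ =>
            (Complex.exp (φ * I) * (b₁ / w) + Complex.exp (-(φ * I)) * (b₂ / w)).im := by
          fun_prop
        obtain ⟨φ₀, hφ₀mem, hφ₀⟩ : ∃ φ₀ ∈ Set.uIcc (0:ℝ) Real.pi,
            (Complex.exp (φ₀ * I) * (b₁ / w) + Complex.exp (-(φ₀ * I)) * (b₂ / w)).im = 0 := by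
          have himg := intermediate_value_uIcc (a := (0:ℝ)) (b := Real.pi) hcont.continuousOn
          have hval : (fun φ : ℝ =>
              (Complex.exp (φ * I) * (b₁ / w) + Complex.exp (-(φ * I)) * (b₂ / w)).im) Real.pi
              = - (fun φ : ℝ =>
              (Complex.exp (φ * I) * (b₁ / w) + Complex.exp (-(φ * I)) * (b₂ / w)).im) 0 := by
            simp [Complex.exp_pi_mul_I, Complex.exp_neg]
            ring
          have h0mem : (0:ℝ) ∈ Set.uIcc
              ((fun φ : ℝ => (Complex.exp (φ * I) * (b₁ / w)
                + Complex.exp (-(φ * I)) * (b₂ / w)).im) 0)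
              ((fun φ : ℝ => (Complex.exp (φ * I) * (b₁ / w)
                + Complex.exp (-(φ * I)) * (b₂ / w)).im) Real.pi) := by
            rw [hval]
            rcases le_total ((fun φ : ℝ => (Complex.exp (φ * I) * (b₁ / w)
                + Complex.exp (-(φ * I)) * (b₂ / w)).im) 0) 0 with h | h
            · exact Set.mem_uIcc.2 (Or.inl ⟨h, by linarith⟩)
            · exact Set.mem_uIcc.2 (Or.inr ⟨by linarith, h⟩)
          obtain ⟨φ₀, hmem, heq⟩ := himg h0mem
          exact ⟨φ₀, hmem, heq⟩
        set ε : ℂ := Complex.exp (φ₀ * I) with hε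
        have hεinv : Complex.exp (-(φ₀ * I)) * ε = 1 := by
          rw [hε, ← Complex.exp_add]; simp
        have hconjε : conj' ε = Complex.exp (-(φ₀ * I)) := by
          rw [hε, ← Complex.exp_conj]
          congr 1
          simp [Complex.conj_I]
        set ρ : ℝ := (ε * (b₁ / w) + Complex.exp (-(φ₀ * I)) * (b₂ / w)).re with hρdef
        have hρ : ε * (b₁ / w) + Complex.exp (-(φ₀ * I)) * (b₂ / w) = (ρ:ℂ) := by
          apply Complex.ext
          · simp [hρdef]
          · simp [hφ₀]
        have hb : ε * b₁ + Complex.exp (-(φ₀ * I)) * b₂ = (ρ:ℂ) * w := by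
          have e1 : b₁ = b₁ / w * w := (div_mul_cancel₀ b₁ hw0).symm
          have e2 : b₂ = b₂ / w * w := (div_mul_cancel₀ b₂ hw0).symm
          nth_rewrite 1 [e1]; nth_rewrite 1 [e2]
          linear_combination w * hρ
        -- find the angle θ₀
        have hu0 : 0 ≤ u := ht _
        have hu1 : u ≤ 1 := by linarith
        obtain ⟨θ₀, hθmem, hθ⟩ : ∃ θ₀ ∈ Set.Icc (0:ℝ) (Real.pi/2),
            Real.sin θ₀ ^ 2 + Real.sin θ₀ * Real.cos θ₀ * ρ = u := by
          have hc2 : ContinuousOn (fun θ : ℝ => Real.sin θ ^ 2 + Real.sin θ * Real.cos θ * ρ)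
              (Set.Icc 0 (Real.pi/2)) := by fun_prop
          have himg := intermediate_value_Icc
            (by positivity : (0:ℝ) ≤ Real.pi/2) hc2
          have hmem : u ∈ Set.Icc
              ((fun θ : ℝ => Real.sin θ ^ 2 + Real.sin θ * Real.cos θ * ρ) 0)
              ((fun θ : ℝ => Real.sin θ ^ 2 + Real.sin θ * Real.cos θ * ρ) (Real.pi/2)) := by
            simp only [Real.sin_zero, Real.cos_zero, Real.sin_pi_div_two, Real.cos_pi_div_two]
            constructor <;> [skip; skip] <;> · simp; linarith
          obtain ⟨θ₀, hm, he⟩ := himg hmem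
          exact ⟨θ₀, hm, he⟩
        set sθ : ℝ := Real.sin θ₀ with hsθ
        set cθ : ℝ := Real.cos θ₀ with hcθ
        have hreal : (sθ:ℂ)^2 + (cθ:ℂ)^2 = 1 := by
          exact_mod_cast Real.sin_sq_add_cos_sq θ₀
        have hθC : (sθ:ℂ)^2 + (sθ:ℂ)*(cθ:ℂ)*(ρ:ℂ) = (u:ℂ) := by exact_mod_cast hθ
        have hS1 : (S:ℂ) = 1 - (u:ℂ) := by linear_combination hSu
        refine ⟨Fin.snoc (fun i => (cθ:ℂ) * y i) (ε * (sθ:ℂ)), ?_, ?_⟩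
        · have e1 : (∑ k : Fin (n+1), conj' ((Fin.snoc (fun i => (cθ:ℂ) * y i) (ε * (sθ:ℂ)) : Fin (n+1) → ℂ) k) * (Fin.snoc (fun i => (cθ:ℂ) * y i) (ε * (sθ:ℂ)) : Fin (n+1) → ℂ) k)
              = (cθ:ℂ)^2 * (∑ k : Fin n, conj' (y k) * y k) + conj' (ε * (sθ:ℂ)) * (ε * (sθ:ℂ)) := by
            rw [Fin.sum_univ_castSucc]
            simp only [Fin.snoc_castSucc, Fin.snoc_last]
            rw [Finset.mul_sum]
            congr 1
            exact Finset.sum_congr rfl fun k _ => by rw [RingHom.map_mul (starRingEnd ℂ), Complex.conj_ofReal]; ring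
          rw [e1, hy1, mul_one]
          have e2 : conj' (ε * (sθ:ℂ)) * (ε * (sθ:ℂ)) = (conj' ε * ε) * (sθ:ℂ)^2 := by
            rw [RingHom.map_mul (starRingEnd ℂ), Complex.conj_ofReal]; ring
          rw [e2, hconjε, hεinv]
          linear_combination hreal
        · rw [expand (Fin.snoc (fun i => (cθ:ℂ) * y i) (ε * (sθ:ℂ)))]
          simp only [Fin.snoc_castSucc, Fin.snoc_last]
          have p1 : (∑ k : Fin n, ∑ l : Fin n, conj' ((cθ:ℂ) * y k) * A' k l * ((cθ:ℂ) * y l))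
              = (cθ:ℂ)^2 * (∑ k : Fin n, ∑ l : Fin n, conj' (y k) * A' k l * y l) := by
            rw [Finset.mul_sum]
            refine Finset.sum_congr rfl fun k _ => ?_
            rw [Finset.mul_sum]
            refine Finset.sum_congr rfl fun l _ => ?_
            rw [RingHom.map_mul (starRingEnd ℂ), Complex.conj_ofReal]; ring
          have p2 : (∑ k : Fin n, conj' ((cθ:ℂ) * y k) * A k.castSucc (Fin.last n))
              = (cθ:ℂ) * b₁ := by
            rw [hb₁, Finset.mul_sum]
            refine Finset.sum_congr rfl fun k _ => ?_
            rw [RingHom.map_mul (starRingEnd ℂ), Complex.conj_ofReal]; ring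
          have p3 : (∑ l : Fin n, A (Fin.last n) l.castSucc * ((cθ:ℂ) * y l))
              = (cθ:ℂ) * b₂ := by
            rw [hb₂, Finset.mul_sum]
            refine Finset.sum_congr rfl fun l _ => ?_
            ring
          rw [p1, p2, p3, hy2, hRHS, RingHom.map_mul (starRingEnd ℂ), Complex.conj_ofReal, hconjε]
          linear_combination (cθ:ℂ)*(sθ:ℂ)*hb + (sθ:ℂ)^2*lamA*hεinv
            + (cθ:ℂ)*(sθ:ℂ)*(ρ:ℂ)*hw + (lamA - c)*hθC + c*hreal + (-c)*hS1

lemma trace_conj_unitary {n : ℕ} (U M : Matrix (Fin n) (Fin n) ℂ)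
    (hU : U ∈ Matrix.unitaryGroup (Fin n) ℂ) : (Uᴴ * M * U).trace = M.trace := by
  have h1 : U * Uᴴ = 1 := by
    have := (Matrix.mem_unitaryGroup_iff).mp hU
    rwa [Matrix.star_eq_conjTranspose] at this
  rw [Matrix.trace_mul_comm (Uᴴ * M) U, ← mul_assoc, h1, one_mul]

lemma entry_eq {n : ℕ} (U M : Matrix (Fin n) (Fin n) ℂ) (i j : Fin n) :
    (Uᴴ * M * U) i j = ∑ k, ∑ l, conj' (U k i) * M k l * U l j := by
  simp only [Matrix.mul_apply, Matrix.conjTranspose_apply, Finset.sum_mul, Complex.star_def]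
  rw [Finset.sum_comm]

lemma main_forward (n : ℕ) : ∀ M : Matrix (Fin n) (Fin n) ℂ, M.trace = 0 →
    ∃ U : Matrix (Fin n) (Fin n) ℂ, U ∈ Matrix.unitaryGroup (Fin n) ℂ ∧
      ∀ i : Fin n, (Uᴴ * M * U) i i = 0 := by
  induction n with
  | zero =>
    intro M _
    exact ⟨1, Submonoid.one_mem _, fun i => i.elim0⟩
  | succ n IH =>
    intro M hM
    -- find a unit vector with vanishing quadratic form
    obtain ⟨x, hx1, hx2⟩ := key (n+1) M (fun _ => ((n:ℝ)+1)⁻¹)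
      (fun _ => by positivity)
      (by rw [Finset.sum_const]; simp; field_simp)
    have hx2' : ∑ k, ∑ l, conj' (x k) * M k l * x l = 0 := by
      rw [hx2, ← Finset.mul_sum]
      have : (∑ i, M i i) = M.trace := rfl
      rw [this, hM, mul_zero]
    -- extend x to an orthonormal basis
    set X : EuclideanSpace ℂ (Fin (n+1)) := WithLp.toLp 2 x with hX
    have hXinner : ⟪X, X⟫_ℂ = 1 := by
      rw [PiLp.inner_apply]
      simpa [hX, Complex.conj_mul'] using hx1
    have hXnorm : ‖X‖ = 1 := by
      have h' : ‖X‖ ^ 2 = 1 := by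
        rw [← inner_self_eq_norm_sq (𝕜 := ℂ), hXinner]; simp
      nlinarith [norm_nonneg X]
    have hv : Orthonormal ℂ (({Fin.last n} : Set (Fin (n+1))).restrict (fun _ => X)) := by
      rw [orthonormal_iff_ite]
      rintro ⟨i, hi⟩ ⟨j, hj⟩
      rw [Set.mem_singleton_iff] at hi hj
      subst hi; subst hj
      simp [hXinner, hXnorm, Set.domRestrict_apply]
      exact Or.inl hXnorm
    obtain ⟨b, hb⟩ := hv.exists_orthonormalBasis_extension_of_card_eq
      (by rw [finrank_euclideanSpace])
    have hblast : b (Fin.last n) = X := hb _ rfl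
    set U₀ : Matrix (Fin (n+1)) (Fin (n+1)) ℂ := Matrix.of fun k i => b i k with hU₀def
    have hbinner : ∀ i j : Fin (n+1), (∑ k, conj' (b i k) * b j k) = if i = j then 1 else 0 := by
      intro i j
      have := orthonormal_iff_ite.mp b.orthonormal i j
      rw [PiLp.inner_apply] at this
      simpa [mul_comm] using this
    have hU₀ : U₀ ∈ Matrix.unitaryGroup (Fin (n+1)) ℂ := by
      rw [Matrix.mem_unitaryGroup_iff']
      ext i j
      rw [Matrix.star_eq_conjTranspose, Matrix.mul_apply]
      simp only [Matrix.conjTranspose_apply, hU₀def, Matrix.of_apply, Complex.star_def]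
      rw [hbinner i j, Matrix.one_apply]
    set B : Matrix (Fin (n+1)) (Fin (n+1)) ℂ := U₀ᴴ * M * U₀ with hBdef
    have hBlast : B (Fin.last n) (Fin.last n) = 0 := by
      rw [hBdef, entry_eq]
      have : ∀ k, U₀ k (Fin.last n) = x k := fun k => by
        rw [hU₀def]; simp only [Matrix.of_apply]; rw [hblast]
      simp only [this]
      exact hx2'
    have hBtr : B.trace = 0 := by rw [hBdef, trace_conj_unitary U₀ M hU₀, hM]
    set B' : Matrix (Fin n) (Fin n) ℂ := B.submatrix Fin.castSucc Fin.castSucc with hB'def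
    have hB'tr : B'.trace = 0 := by
      have : B.trace = B'.trace + B (Fin.last n) (Fin.last n) := by
        rw [Matrix.trace, Matrix.trace, Fin.sum_univ_castSucc]
        rfl
      rw [this, hBlast, add_zero] at hBtr
      exact hBtr
    obtain ⟨U', hU', hdiag'⟩ := IH B' hB'tr
    -- assemble the block unitary
    set D : Matrix (Fin (n+1)) (Fin (n+1)) ℂ := Matrix.of fun i j =>
      if hi : i = Fin.last n then (if j = Fin.last n then 1 else 0)
      else (if hj : j = Fin.last n then 0 else U' (i.castPred hi) (j.castPred hj)) with hDdef
    have hD1 : ∀ i' j' : Fin n, D i'.castSucc j'.castSucc = U' i' j' := by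
      intro i' j'
      rw [hDdef]
      simp [(Fin.castSucc_lt_last _).ne, Fin.castPred_castSucc]
    have hD2 : D (Fin.last n) (Fin.last n) = 1 := by rw [hDdef]; simp
    have hD3 : ∀ j' : Fin n, D (Fin.last n) j'.castSucc = 0 := by
      intro j'; rw [hDdef]; simp [(Fin.castSucc_lt_last j').ne]
    have hD4 : ∀ i' : Fin n, D i'.castSucc (Fin.last n) = 0 := by
      intro i'; rw [hDdef]; simp [(Fin.castSucc_lt_last i').ne]
    have hU'unit : star U' * U' = 1 := Matrix.mem_unitaryGroup_iff'.mp hU'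
    have hD : D ∈ Matrix.unitaryGroup (Fin (n+1)) ℂ := by
      rw [Matrix.mem_unitaryGroup_iff']
      ext i j
      rw [Matrix.star_eq_conjTranspose, Matrix.mul_apply, Fin.sum_univ_castSucc]
      simp only [Matrix.conjTranspose_apply]
      induction i using Fin.lastCases with
      | last =>
        induction j using Fin.lastCases with
        | last => simp [hD2, hD4, Matrix.one_apply]
        | cast j' => simp [hD2, hD3, hD4, Matrix.one_apply, (Fin.castSucc_lt_last j').ne']
      | cast i' =>
        induction j using Fin.lastCases with
        | last => simp [hD2, hD3, hD4, Matrix.one_apply, (Fin.castSucc_lt_last i').ne]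
        | cast j' =>
          simp only [hD1, hD3, hD4, star_zero, zero_mul, mul_zero, add_zero]
          have h : (star U' * U') i' j' = (1 : Matrix (Fin n) (Fin n) ℂ) i' j' := by
            rw [hU'unit]
          rw [Matrix.mul_apply] at h
          simp only [Matrix.star_apply] at h
          rw [h, Matrix.one_apply, Matrix.one_apply]
          simp [Fin.castSucc_inj]
    refine ⟨U₀ * D, Submonoid.mul_mem _ hU₀ hD, ?_⟩
    intro i
    have hassoc : (U₀ * D)ᴴ * M * (U₀ * D) = Dᴴ * B * D := by
      rw [hBdef, Matrix.conjTranspose_mul]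
      simp only [Matrix.mul_assoc]
    rw [hassoc, entry_eq]
    induction i using Fin.lastCases with
    | last =>
      simp [Fin.sum_univ_castSucc, hD2, hD4, hBlast]
    | cast i' =>
      have hd := hdiag' i'
      rw [entry_eq] at hd
      simp only [hB'def, Matrix.submatrix_apply] at hd
      simp only [Fin.sum_univ_castSucc, hD1, hD3, hD4, _root_.map_zero, _root_.map_one, zero_mul, mul_zero,
        one_mul, mul_one, add_zero, zero_add, Finset.sum_const_zero]
      simpa using hd

/-- Finite-dimensional case of Fan's lemma: an `n × n` complex matrix has trace zero
if and only if it is unitarily conjugate to a matrix with all diagonal entries zero. -/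
theorem trace_zero_iff_exists_unitary_zero_diag (n : ℕ) (hn : 1 ≤ n)
    (M : Matrix (Fin n) (Fin n) ℂ) :
    M.trace = 0 ↔
      ∃ U : Matrix (Fin n) (Fin n) ℂ, U ∈ Matrix.unitaryGroup (Fin n) ℂ ∧
        ∀ i : Fin n, (Uᴴ * M * U) i i = 0 := by
  constructor
  · exact main_forward n M
  · rintro ⟨U, hU, hd⟩
    have h := trace_conj_unitary U M hU
    rw [← h, Matrix.trace]
    simp [Matrix.diag, hd]
end

section
/- Let n ≥ 1 and let M be a matrix in Matrix (Fin n) (Fin n) ℂ with trace zero. Then there exists a unit vector v : EuclideanSpace ℂ (Fin n), ‖v‖ = 1, such that ⟪v, M.mulVec v⟫ = 0, i.e., ∑ i, conj (v i) * (M.mulVec v) i = 0. -/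
open Matrix

local notation "⟪" x ", " y "⟫" => @inner ℂ _ _ x y

open Complex

variable {n : ℕ}

private lemma expand_inner_mulVec (M : Matrix (Fin n) (Fin n) ℂ) (p q : ℂ)
    (u w : EuclideanSpace ℂ (Fin n)) :
    ⟪(p • u + q • w : EuclideanSpace ℂ (Fin n)),
      (WithLp.toLp 2 (M.mulVec (p • u + q • w : EuclideanSpace ℂ (Fin n))) : EuclideanSpace ℂ (Fin n))⟫ =
      (starRingEnd ℂ) p * p * ⟪u, (WithLp.toLp 2 (M.mulVec u) : EuclideanSpace ℂ (Fin n))⟫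
      + (starRingEnd ℂ) p * q * ⟪u, (WithLp.toLp 2 (M.mulVec w) : EuclideanSpace ℂ (Fin n))⟫
      + (starRingEnd ℂ) q * p * ⟪w, (WithLp.toLp 2 (M.mulVec u) : EuclideanSpace ℂ (Fin n))⟫
      + (starRingEnd ℂ) q * q * ⟪w, (WithLp.toLp 2 (M.mulVec w) : EuclideanSpace ℂ (Fin n))⟫ := by
  have h : M.mulVec (p • u + q • w) = p • M.mulVec u + q • M.mulVec w := by
    rw [Matrix.mulVec_add, Matrix.mulVec_smul, Matrix.mulVec_smul]
  show ⟪(p • u + q • w : EuclideanSpace ℂ (Fin n)),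
      WithLp.toLp 2 (M.mulVec (p • u + q • w))⟫ = _
  rw [h]
  rw [WithLp.toLp_add, WithLp.toLp_smul, WithLp.toLp_smul]
  simp only [inner_add_left, inner_add_right, inner_smul_left, inner_smul_right]
  ring

private lemma expand_inner' (p q : ℂ) (u w : EuclideanSpace ℂ (Fin n)) :
    ⟪(p • u + q • w : EuclideanSpace ℂ (Fin n)), (p • u + q • w : EuclideanSpace ℂ (Fin n))⟫ =
      (starRingEnd ℂ) p * p * ⟪u, u⟫ + (starRingEnd ℂ) p * q * ⟪u, w⟫
      + (starRingEnd ℂ) q * p * ⟪w, u⟫ + (starRingEnd ℂ) q * q * ⟪w, w⟫ := by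
  simp only [inner_add_left, inner_add_right, inner_smul_left, inner_smul_right]
  ring

private lemma inner_mulVec_smul' (M : Matrix (Fin n) (Fin n) ℂ) (p : ℂ)
    (u : EuclideanSpace ℂ (Fin n)) :
    ⟪(p • u : EuclideanSpace ℂ (Fin n)), (WithLp.toLp 2 (M.mulVec (p • u : EuclideanSpace ℂ (Fin n))) : EuclideanSpace ℂ (Fin n))⟫ =
      (starRingEnd ℂ) p * p * ⟪u, (WithLp.toLp 2 (M.mulVec u) : EuclideanSpace ℂ (Fin n))⟫ := by
  have h : M.mulVec (p • u) = p • M.mulVec u := Matrix.mulVec_smul M p u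
  show ⟪(p • u : EuclideanSpace ℂ (Fin n)),
      WithLp.toLp 2 (M.mulVec (p • u))⟫ = _
  rw [h]
  rw [WithLp.toLp_smul, inner_smul_left, inner_smul_right]; ring

private lemma exists_phase (u v : ℂ) :
    ∃ c : ℂ, ‖c‖ = 1 ∧
      (starRingEnd ℂ) (c * u + (starRingEnd ℂ) c * v) = c * u + (starRingEnd ℂ) c * v := by
  by_cases hd : u - (starRingEnd ℂ) v = 0
  · refine ⟨1, by simp, ?_⟩
    have hu : u = (starRingEnd ℂ) v := by linear_combination hd
    simp [hu, add_comm]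
  · set d : ℂ := u - (starRingEnd ℂ) v with hdd
    refine ⟨(starRingEnd ℂ) d / ‖d‖, ?_, ?_⟩
    · rw [norm_div]
      simp only [RCLike.norm_conj, Complex.norm_real, norm_norm]
      rw [div_self (norm_ne_zero_iff.2 hd)]
    · have hcd : (starRingEnd ℂ) ((starRingEnd ℂ) d / ‖d‖ * d)
          = (starRingEnd ℂ) d / ‖d‖ * d := by
        rw [div_mul_eq_mul_div, map_div₀]
        congr 1
        · rw [_root_.map_mul, Complex.conj_conj]; ring
        · exact Complex.conj_ofReal _
      set c : ℂ := (starRingEnd ℂ) d / ‖d‖ with hcc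
      have key : (starRingEnd ℂ) (c * u + (starRingEnd ℂ) c * v)
            - (c * u + (starRingEnd ℂ) c * v)
          = (starRingEnd ℂ) (c * d) - c * d := by
        rw [hdd]
        simp only [map_add, _root_.map_mul, map_sub, Complex.conj_conj]
        ring
      rw [hcd, sub_self] at key
      linear_combination key

private lemma segment_mem (M : Matrix (Fin n) (Fin n) ℂ) (x y : EuclideanSpace ℂ (Fin n))
    (hx : ‖x‖ = 1) (hy : ‖y‖ = 1) (tt : ℝ) (ht0 : 0 ≤ tt) (ht1 : tt ≤ 1) :
    ∃ v : EuclideanSpace ℂ (Fin n), ‖v‖ = 1 ∧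
      ⟪v, (WithLp.toLp 2 (M.mulVec v) : EuclideanSpace ℂ (Fin n))⟫ =
        (1 - (tt : ℂ)) * ⟪x, (WithLp.toLp 2 (M.mulVec x) : EuclideanSpace ℂ (Fin n))⟫
          + (tt : ℂ) * ⟪y, (WithLp.toLp 2 (M.mulVec y) : EuclideanSpace ℂ (Fin n))⟫ := by
  set a := ⟪x, (WithLp.toLp 2 (M.mulVec x) : EuclideanSpace ℂ (Fin n))⟫ with ha
  set b := ⟪y, (WithLp.toLp 2 (M.mulVec y) : EuclideanSpace ℂ (Fin n))⟫ with hb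
  by_cases hab : a = b
  · exact ⟨x, hx, by rw [← ha, hab]; ring⟩
  have hab' : a - b ≠ 0 := sub_ne_zero.mpr hab
  have hxx : ⟪x, x⟫ = 1 := by rw [inner_self_eq_norm_sq_to_K, hx]; norm_num
  have hyy : ⟪y, y⟫ = 1 := by rw [inner_self_eq_norm_sq_to_K, hy]; norm_num
  set sxy := ⟪x, (WithLp.toLp 2 (M.mulVec y) : EuclideanSpace ℂ (Fin n))⟫ with hsxy
  set syx := ⟪y, (WithLp.toLp 2 (M.mulVec x) : EuclideanSpace ℂ (Fin n))⟫ with hsyx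
  obtain ⟨c, hcnorm, hcreal⟩ := exists_phase ((sxy - b * ⟪x, y⟫) / (a - b))
    ((syx - b * ⟪y, x⟫) / (a - b))
  set ρ : ℂ := c * ((sxy - b * ⟪x, y⟫) / (a - b))
    + (starRingEnd ℂ) c * ((syx - b * ⟪y, x⟫) / (a - b)) with hρ
  have hρre : ((ρ.re : ℝ) : ℂ) = ρ := Complex.conj_eq_iff_re.mp hcreal
  have hcc : (starRingEnd ℂ) c * c = 1 := by
    rw [mul_comm, Complex.mul_conj]
    norm_cast
    rw [Complex.normSq_eq_norm_sq, hcnorm]; norm_num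
  set z : ℝ → EuclideanSpace ℂ (Fin n) :=
    fun s => (1 - (s : ℂ)) • x + ((s : ℂ) * c) • y with hz
  -- main algebraic identity along the path
  have hQ : ∀ s : ℝ,
      ⟪z s, (WithLp.toLp 2 (M.mulVec (z s)) : EuclideanSpace ℂ (Fin n))⟫ - b * ⟪z s, z s⟫
        = (a - b) * ((1 - (s : ℂ)) ^ 2 + (s : ℂ) * (1 - (s : ℂ)) * ρ) := by
    intro s
    have h1 := expand_inner_mulVec M (1 - (s : ℂ)) ((s : ℂ) * c) x y
    have h2 := expand_inner' (1 - (s : ℂ)) ((s : ℂ) * c) x y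
    rw [hz]
    rw [h1, h2, hxx, hyy, ← ha, ← hb, ← hsxy, ← hsyx, hρ]
    simp only [map_sub, _root_.map_mul, _root_.map_one, Complex.conj_ofReal]
    field_simp
    ring
  -- the path never vanishes
  have hzne : ∀ s ∈ Set.Icc (0:ℝ) 1, z s ≠ 0 := by
    rintro s ⟨hs0, hs1⟩ h0
    rw [hz] at h0
    have hnorm : ‖(1 - (s : ℂ)) • x‖ = ‖((s : ℂ) * c) • y‖ := by
      have : (1 - (s : ℂ)) • x = -(((s : ℂ) * c) • y) := by
        rw [add_eq_zero_iff_eq_neg] at h0; exact h0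
      rw [this, norm_neg]
    rw [norm_smul, norm_smul, hx, hy, norm_mul, hcnorm, mul_one, mul_one, mul_one] at hnorm
    have h1s : 1 - (s : ℂ) = ((1 - s : ℝ) : ℂ) := by push_cast; ring
    rw [h1s, Complex.norm_real, Real.norm_eq_abs, Complex.norm_real, Real.norm_eq_abs,
      _root_.abs_of_nonneg (by linarith), _root_.abs_of_nonneg hs0] at hnorm
    have hs : s = 1/2 := by linarith
    subst hs
    have hxy : x = (-c) • y := by
      have h2 := congrArg (fun w : EuclideanSpace ℂ (Fin n) => (2:ℂ) • w) h0
      simp only [smul_add, smul_smul, smul_zero] at h2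
      have e1 : (2:ℂ) * (1 - ((1/2 : ℝ) : ℂ)) = 1 := by push_cast; ring
      have e2 : (2:ℂ) * (((1/2 : ℝ) : ℂ) * c) = c := by push_cast; ring
      rw [e1, e2, one_smul] at h2
      have := eq_neg_of_add_eq_zero_left h2
      rw [this, ← neg_smul]
    apply hab
    rw [ha, hxy, inner_mulVec_smul', ← hb]
    have : (starRingEnd ℂ) (-c) * (-c) = 1 := by
      rw [map_neg]; rw [neg_mul_neg]; exact hcc
    rw [this, one_mul]
  -- IVT
  set f : ℝ → ℝ :=
    fun s => (1 - s)^2 + s * (1 - s) * ρ.re - (1 - tt) * ‖z s‖^2 with hf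
  have hzcont : Continuous z := by
    rw [hz]
    exact ((continuous_const.sub Complex.continuous_ofReal).smul continuous_const).add
      ((Complex.continuous_ofReal.mul continuous_const).smul continuous_const)
  have hfcont : Continuous f := by
    rw [hf]
    exact (((continuous_const.sub continuous_id).pow 2).add
      ((continuous_id.mul (continuous_const.sub continuous_id)).mul continuous_const)).sub
      (continuous_const.mul ((hzcont.norm).pow 2))
  have hz0 : z 0 = x := by rw [hz]; simp
  have hz1 : z 1 = c • y := by rw [hz]; simp
  have hf0 : f 0 = tt := by rw [hf]; simp [hz0, hx]
  have hf1 : f 1 = tt - 1 := by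
    rw [hf]; simp [hz1, norm_smul, hcnorm, hy]
  have hmem : (0:ℝ) ∈ Set.Icc (f 1) (f 0) := by
    rw [hf0, hf1]; constructor <;> linarith
  obtain ⟨t₀, ht₀, hft₀⟩ :=
    intermediate_value_Icc' (by norm_num : (0:ℝ) ≤ 1) hfcont.continuousOn hmem
  have hN : 0 < ‖z t₀‖ := norm_pos_iff.mpr (hzne t₀ ht₀)
  refine ⟨((‖z t₀‖ : ℂ))⁻¹ • z t₀, ?_, ?_⟩
  · rw [norm_smul, norm_inv, Complex.norm_real, Real.norm_eq_abs, abs_of_pos hN,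
      inv_mul_cancel₀ hN.ne']
  · rw [inner_mulVec_smul']
    have hconj : (starRingEnd ℂ) ((‖z t₀‖ : ℂ))⁻¹ = ((‖z t₀‖ : ℂ))⁻¹ := by
      rw [map_inv₀, Complex.conj_ofReal]
    rw [hconj]
    -- real equation from IVT
    have hreal : (1 - t₀)^2 + t₀ * (1 - t₀) * ρ.re = (1 - tt) * ‖z t₀‖^2 := by
      have h := hft₀
      rw [hf] at h
      beta_reduce at h
      linarith
    have hrealC : (1 - (t₀ : ℂ))^2 + (t₀ : ℂ) * (1 - (t₀ : ℂ)) * ρ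
        = (1 - (tt : ℂ)) * ((‖z t₀‖ : ℂ))^2 := by
      rw [← hρre]
      exact_mod_cast congrArg (fun r : ℝ => (r : ℂ)) hreal
    have hQt := hQ t₀
    rw [hrealC] at hQt
    have hNz : ⟪z t₀, z t₀⟫ = ((‖z t₀‖ : ℂ))^2 := inner_self_eq_norm_sq_to_K (z t₀)
    rw [hNz] at hQt
    have hNne : ((‖z t₀‖ : ℂ)) ≠ 0 := by
      simp only [ne_eq, Complex.ofReal_eq_zero]; exact hN.ne'
    have hQval : ⟪z t₀, (WithLp.toLp 2 (M.mulVec (z t₀)) : EuclideanSpace ℂ (Fin n))⟫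
        = ((1 - (tt:ℂ)) * a + (tt:ℂ) * b) * ((‖z t₀‖ : ℂ))^2 := by linear_combination hQt
    rw [hQval]
    have hNinv : ((‖z t₀‖ : ℂ))⁻¹ * ((‖z t₀‖ : ℂ)) = 1 := inv_mul_cancel₀ hNne
    linear_combination (((‖z t₀‖ : ℂ))⁻¹ * ((‖z t₀‖ : ℂ)) + 1)
      * ((1 - (tt:ℂ)) * a + (tt:ℂ) * b) * hNinv

/-- For a trace-zero complex matrix, `0` lies in its numerical range: there is a unit
vector `v` with `⟪v, M v⟫ = 0`. -/
theorem exists_unit_vector_inner_mulVec_eq_zero (n : ℕ) (hn : 1 ≤ n)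
    (M : Matrix (Fin n) (Fin n) ℂ) (hM : M.trace = 0) :
    ∃ v : EuclideanSpace ℂ (Fin n), ‖v‖ = 1 ∧
      ⟪v, (WithLp.toLp 2 (M.mulVec v) : EuclideanSpace ℂ (Fin n))⟫ = 0 := by
  set S : Set ℂ := {w | ∃ v : EuclideanSpace ℂ (Fin n), ‖v‖ = 1 ∧
    ⟪v, (WithLp.toLp 2 (M.mulVec v) : EuclideanSpace ℂ (Fin n))⟫ = w} with hS
  have hconv : Convex ℝ S := by
    intro p hp q hq α β hα hβ hαβ
    obtain ⟨xv, hxv, hxp⟩ := hp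
    obtain ⟨yv, hyv, hyq⟩ := hq
    obtain ⟨v, hv, hval⟩ := segment_mem M xv yv hxv hyv β hβ (by linarith)
    refine ⟨v, hv, ?_⟩
    rw [hval, hxp, hyq, Complex.real_smul, Complex.real_smul]
    have hcast : (α : ℂ) + (β : ℂ) = 1 := by exact_mod_cast congrArg (fun r : ℝ => (r : ℂ)) hαβ
    linear_combination -p * hcast
  have hmem : ∀ i : Fin n, M i i ∈ S := by
    intro i
    refine ⟨EuclideanSpace.single i 1, ?_, ?_⟩
    · rw [EuclideanSpace.norm_single]; norm_num
    · rw [EuclideanSpace.inner_single_left]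
      have : (M.mulVec (EuclideanSpace.single i (1:ℂ)) : Fin n → ℂ)
          = M.mulVec (Pi.single i (1:ℂ)) := by
        congr 1
      rw [_root_.map_one, one_mul]
      show (M.mulVec (EuclideanSpace.single i (1:ℂ))) i = M i i
      rw [this, Matrix.mulVec_single]
      exact mul_one _
  have hsum : ∑ i : Fin n, ((n : ℝ)⁻¹ : ℝ) • (M i i) ∈ S := by
    apply hconv.sum_mem
    · intro i _; positivity
    · rw [Finset.sum_const, Finset.card_univ, Fintype.card_fin, nsmul_eq_mul]
      field_simp
    · intro i _; exact hmem i
  have htr : ∑ i : Fin n, M i i = 0 := by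
    rw [← hM]; rfl
  have h0 : ∑ i : Fin n, ((n : ℝ)⁻¹ : ℝ) • (M i i) = 0 := by
    rw [← Finset.smul_sum, htr, smul_zero]
  rw [h0] at hsum
  exact hsum
end

section
/- Let dA, dB ≥ 1 and let ψ, φ : EuclideanSpace ℂ (Fin dA × Fin dB) be unit vectors with ⟪φ, ψ⟫ = 0. Then there exists an orthonormal basis (v_i)_{i : Fin dA} of EuclideanSpace ℂ (Fin dA) such that for every i, the conditional states satisfy ⟪φ^{|v_i}, ψ^{|v_i}⟫ = 0. -/
local notation "⟪" x ", " y "⟫" => @inner ℂ _ _ x y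

/-- The conditional state of a bipartite vector `ψ` relative to a vector `v` on the
first subsystem: `(condState ψ v) j = ∑ a, conj (v a) * ψ (a, j)`. -/
noncomputable def condState {dA dB : ℕ} (ψ : EuclideanSpace ℂ (Fin dA × Fin dB))
    (v : EuclideanSpace ℂ (Fin dA)) : EuclideanSpace ℂ (Fin dB) :=
  WithLp.toLp 2 (fun j => ∑ a : Fin dA, (starRingEnd ℂ) (v a) * ψ (a, j))

open Module Finset

section Aux

variable {E : Type} [NormedAddCommGroup E] [InnerProductSpace ℂ E]

lemma numRange_convex [FiniteDimensional ℂ E] (T : E →ₗ[ℂ] E) :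
    Convex ℝ {c : ℂ | ∃ x : E, ‖x‖ = 1 ∧ ⟪x, T x⟫ = c} := by
  classical
  have hB : ∀ (β : ℂ) (x y : E) (p q : ℝ),
      ⟪(p:ℂ) • x + (q:ℂ) • y, T ((p:ℂ) • x + (q:ℂ) • y)⟫
        - β * ⟪(p:ℂ) • x + (q:ℂ) • y, (p:ℂ) • x + (q:ℂ) • y⟫
      = (p:ℂ)^2 * (⟪x, T x⟫ - β * ⟪x, x⟫)
        + (p*q:ℝ) * ((⟪x, T y⟫ - β * ⟪x, y⟫) + (⟪y, T x⟫ - β * ⟪y, x⟫))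
        + (q:ℂ)^2 * (⟪y, T y⟫ - β * ⟪y, y⟫) := by
    intro β x y p q
    simp only [inner_add_left, inner_add_right, inner_smul_left (𝕜 := ℂ),
      inner_smul_right (𝕜 := ℂ), map_add, map_smul, Complex.conj_ofReal]
    push_cast
    ring
  rintro α ⟨x, hx, rfl⟩ β ⟨y, hy, rfl⟩ a b ha hb hab
  by_cases hαβ : ⟪x, T x⟫ = ⟪y, T y⟫
  · refine ⟨x, hx, ?_⟩
    rw [hαβ, ← add_smul, hab, one_smul]
  set β := ⟪y, T y⟫ with hβdef
  have hxx : ⟪x, x⟫ = 1 := by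
    rw [inner_self_eq_norm_sq_to_K, hx]; norm_num
  have hyy : ⟪y, y⟫ = 1 := by
    rw [inner_self_eq_norm_sq_to_K, hy]; norm_num
  set γ : ℂ := ⟪x, T x⟫ - β with hγdef
  have hγ : γ ≠ 0 := sub_ne_zero.mpr hαβ
  have hByy : ⟪y, T y⟫ - β * ⟪y, y⟫ = 0 := by rw [hyy, hβdef]; ring
  set k1 : ℂ := γ⁻¹ * (⟪x, T y⟫ - β * ⟪x, y⟫) with hk1
  set k2 : ℂ := γ⁻¹ * (⟪y, T x⟫ - β * ⟪y, x⟫) with hk2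
  set d : ℂ := k2 - (starRingEnd ℂ) k1 with hd
  set w : ℂ := if d = 0 then 1 else (‖d‖ : ℂ) / d with hw
  have hwn : ‖w‖ = 1 := by
    rw [hw]
    split_ifs with h
    · simp
    · rw [norm_div, Complex.norm_real, norm_norm, div_self (norm_ne_zero_iff.mpr h)]
  have hw1 : (starRingEnd ℂ) w * w = 1 := by
    rw [← Complex.normSq_eq_conj_mul_self, Complex.normSq_eq_norm_sq, hwn]
    norm_num
  have hwd : (w * d).im = 0 := by
    rw [hw]
    split_ifs with h
    · simp [h]
    · rw [div_mul_cancel₀ _ h]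
      simp
  clear_value k1 k2 d w
  set x' : E := w • x with hx'def
  clear_value x'
  have hx' : ‖x'‖ = 1 := by rw [hx'def, norm_smul, hwn, hx, mul_one]
  have hBx'x' : ⟪x', T x'⟫ - β * ⟪x', x'⟫ = γ := by
    rw [hx'def]
    simp only [inner_smul_left (𝕜 := ℂ), inner_smul_right (𝕜 := ℂ), map_smul, smul_eq_mul]
    rw [hxx, hγdef]
    linear_combination (⟪x, T x⟫ - β) * hw1
  set cross : ℂ := γ⁻¹ * ((⟪x', T y⟫ - β * ⟪x', y⟫) + (⟪y, T x'⟫ - β * ⟪y, x'⟫)) with hcrossdef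
  have hcross_eq : cross = (starRingEnd ℂ) w * k1 + w * k2 := by
    rw [hcrossdef, hx'def, hk1, hk2]
    simp only [inner_smul_left (𝕜 := ℂ), inner_smul_right (𝕜 := ℂ), map_smul, smul_eq_mul]
    ring
  clear_value cross
  have hcrossim : cross.im = 0 := by
    have h2 : cross = ((starRingEnd ℂ) (w * (starRingEnd ℂ) k1)
        + w * (starRingEnd ℂ) k1) + w * d := by
      rw [hcross_eq, hd, map_mul, Complex.conj_conj]
      ring
    rw [h2]
    simp only [Complex.add_im, Complex.conj_im, Complex.mul_im, hwd]
    ring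
  set Z : ℝ → E := fun s => ((1-s : ℝ) : ℂ) • x' + ((s:ℝ) : ℂ) • y with hZdef
  have hZ0 : Z 0 = x' := by rw [hZdef]; norm_num
  have hZ1 : Z 1 = y := by rw [hZdef]; norm_num
  have hZc : Continuous Z := by
    rw [hZdef]
    apply Continuous.add
    · exact (Complex.continuous_ofReal.comp (continuous_const.sub continuous_id)).smul
        continuous_const
    · exact (Complex.continuous_ofReal.comp continuous_id).smul continuous_const
  have hZexp : ∀ s : ℝ, ⟪Z s, T (Z s)⟫ - β * ⟪Z s, Z s⟫
      = ((1-s : ℝ) : ℂ)^2 * γ + ((1-s)*s : ℝ) * ((⟪x', T y⟫ - β * ⟪x', y⟫) + (⟪y, T x'⟫ - β * ⟪y, x'⟫)) := by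
    intro s
    rw [hZdef]
    simp only
    rw [hB β x' y (1-s) s, hBx'x', hByy]
    ring
  clear_value Z
  have hZne : ∀ s ∈ Set.Icc (0:ℝ) 1, Z s ≠ 0 := by
    rintro s ⟨hs0, hs1⟩ h0
    rw [hZdef] at h0
    simp only at h0
    have h1 : ((1-s : ℝ) : ℂ) • x' = -(((s:ℝ) : ℂ) • y) := by
      rw [eq_neg_iff_add_eq_zero]; exact h0
    have h2 : 1 - s = s := by
      have h1n := congrArg norm h1
      rw [norm_neg, norm_smul, norm_smul, Complex.norm_real, Complex.norm_real, hx', hy,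
        mul_one, mul_one, Real.norm_eq_abs, Real.norm_eq_abs,
        abs_of_nonneg (by linarith : (0:ℝ) ≤ 1 - s), abs_of_nonneg hs0] at h1n
      exact h1n
    have hs : s = 1/2 := by linarith
    have h3 : x' = -y := by
      rw [hs, show (1 - 1/2 : ℝ) = 1/2 by norm_num] at h1
      rw [← smul_neg] at h1
      exact smul_right_injective E (by norm_num : ((1/2 : ℝ) : ℂ) ≠ 0) h1
    apply hγ
    rw [← hBx'x', h3, map_neg, inner_neg_neg, inner_neg_neg]
    exact hByy
  set g : ℝ → ℂ := fun s => γ⁻¹ * (⟪Z s, T (Z s)⟫ - β * ⟪Z s, Z s⟫) with hgdef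
  have hTc : Continuous T := T.continuous_of_finiteDimensional
  have hgc : Continuous g := by
    rw [hgdef]
    apply continuous_const.mul
    exact (hZc.inner (hTc.comp hZc)).sub (continuous_const.mul (hZc.inner hZc))
  have hg : ∀ s : ℝ, g s = (((1-s)^2 : ℝ) : ℂ) + ((s*(1-s) : ℝ) : ℂ) * cross := by
    intro s
    rw [hgdef]
    simp only
    rw [hZexp s, hcrossdef]
    push_cast
    linear_combination ((1:ℂ) - (s:ℂ))^2 * inv_mul_cancel₀ hγ
  clear_value g
  have him : ∀ s : ℝ, (g s).im = 0 := by
    intro s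
    rw [hg s]
    simp only [Complex.add_im, Complex.mul_im, Complex.ofReal_im, Complex.ofReal_re, hcrossim]
    ring
  set f : ℝ → ℝ := fun s => (g s).re / ‖Z s‖^2 with hfdef
  have hf0 : f 0 = 1 := by
    rw [hfdef]
    simp only [hZ0, hx']
    rw [hg 0]
    norm_num
  have hf1 : f 1 = 0 := by
    rw [hfdef]
    simp only
    rw [hg 1]
    norm_num
  have hfc : ContinuousOn f (Set.Icc 0 1) := by
    rw [hfdef]
    apply ContinuousOn.div
    · exact (Complex.continuous_re.comp hgc).continuousOn
    · exact ((continuous_norm.comp hZc).pow 2).continuousOn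
    · exact fun s hs => pow_ne_zero _ (norm_ne_zero_iff.mpr (hZne s hs))
  clear_value f
  have hmem : a ∈ Set.Icc (f 1) (f 0) := by
    rw [hf0, hf1]
    exact ⟨ha, by linarith⟩
  obtain ⟨s, hs, hfs⟩ := intermediate_value_Icc' zero_le_one hfc hmem
  have hrne : ‖Z s‖ ≠ 0 := norm_ne_zero_iff.mpr (hZne s hs)
  set u : E := ((‖Z s‖⁻¹ : ℝ) : ℂ) • Z s with hudef
  have hu : ‖u‖ = 1 := by
    rw [hudef, norm_smul, Complex.norm_real, Real.norm_eq_abs,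
      abs_of_nonneg (inv_nonneg.mpr (norm_nonneg _)), inv_mul_cancel₀ hrne]
  clear_value u
  refine ⟨u, hu, ?_⟩
  have huu : ⟪u, u⟫ = 1 := by
    rw [inner_self_eq_norm_sq_to_K, hu]; norm_num
  have hqu : ⟪u, T u⟫ - β * ⟪u, u⟫
      = ((‖Z s‖⁻¹^2 : ℝ) : ℂ) * (⟪Z s, T (Z s)⟫ - β * ⟪Z s, Z s⟫) := by
    rw [hudef]
    simp only [inner_smul_left (𝕜 := ℂ), inner_smul_right (𝕜 := ℂ), map_smul, smul_eq_mul,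
      Complex.conj_ofReal]
    push_cast
    ring
  have h6 : γ⁻¹ * (⟪u, T u⟫ - β) = ((‖Z s‖⁻¹^2 : ℝ) : ℂ) * g s := by
    rw [huu, mul_one] at hqu
    rw [hgdef]
    simp only
    rw [hqu]
    ring
  have hgsre : g s = (((g s).re : ℝ) : ℂ) := by
    rw [Complex.ext_iff]
    simp [him s]
  have h7 : ((‖Z s‖⁻¹^2 : ℝ) : ℂ) * g s = ((a : ℝ) : ℂ) := by
    rw [hgsre, ← Complex.ofReal_mul]
    congr 1
    rw [← hfs, hfdef]
    simp only
    field_simp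
  rw [h7] at h6
  have h8 : ⟪u, T u⟫ - β = γ * (a : ℂ) := by
    rw [← h6, ← mul_assoc, mul_inv_cancel₀ hγ, one_mul]
  have hb' : (b : ℝ) = 1 - a := by linarith
  rw [Complex.real_smul, Complex.real_smul, hb']
  push_cast
  linear_combination h8 + (a : ℂ) * hγdef

lemma sum_inner_map_eq {ι κ : Type*} [Fintype ι] [Fintype κ]
    (b : OrthonormalBasis ι ℂ E) (c : OrthonormalBasis κ ℂ E) (T : E →ₗ[ℂ] E) :
    ∑ i, ⟪b i, T (b i)⟫ = ∑ j, ⟪c j, T (c j)⟫ := by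
  have h1 : ∀ i, ⟪b i, T (b i)⟫ = ∑ j, ⟪b i, c j⟫ * ⟪c j, T (b i)⟫ :=
    fun i => (c.sum_inner_mul_inner (b i) (T (b i))).symm
  have h2 : ∀ j, ⟪c j, T (c j)⟫ = ∑ i, ⟪b i, c j⟫ * ⟪c j, T (b i)⟫ := by
    intro j
    have h3 := congrArg (fun v => (⟪c j, T v⟫ : ℂ)) (b.sum_repr' (c j))
    simp only [map_sum, map_smul, inner_sum, inner_smul_right (𝕜 := ℂ), smul_eq_mul] at h3
    exact h3.symm
  calc ∑ i, ⟪b i, T (b i)⟫ = ∑ i, ∑ j, ⟪b i, c j⟫ * ⟪c j, T (b i)⟫ :=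
        Finset.sum_congr rfl fun i _ => h1 i
    _ = ∑ j, ∑ i, ⟪b i, c j⟫ * ⟪c j, T (b i)⟫ := Finset.sum_comm
    _ = ∑ j, ⟪c j, T (c j)⟫ := Finset.sum_congr rfl fun j _ => (h2 j).symm

lemma exists_unit_inner_zero [FiniteDimensional ℂ E] {n : ℕ} (hn : 0 < n)
    (T : E →ₗ[ℂ] E) (b : OrthonormalBasis (Fin n) ℂ E)
    (h : ∑ i, ⟪b i, T (b i)⟫ = 0) : ∃ u : E, ‖u‖ = 1 ∧ ⟪u, T u⟫ = 0 := by
  have hconv := numRange_convex T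
  have hmem : ∀ i ∈ Finset.univ, ⟪b i, T (b i)⟫ ∈ {c : ℂ | ∃ x : E, ‖x‖ = 1 ∧ ⟪x, T x⟫ = c} :=
    fun i _ => ⟨b i, b.orthonormal.1 i, rfl⟩
  have h0 : (0 : ℂ) ∈ {c : ℂ | ∃ x : E, ‖x‖ = 1 ∧ ⟪x, T x⟫ = c} := by
    have hw : ∀ i ∈ Finset.univ, (0:ℝ) ≤ (fun _ : Fin n => (n : ℝ)⁻¹) i :=
      fun i _ => by positivity
    have hw1 : ∑ _i : Fin n, (n : ℝ)⁻¹ = 1 := by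
      rw [Finset.sum_const, Finset.card_univ, Fintype.card_fin, nsmul_eq_mul,
        mul_inv_cancel₀ (Nat.cast_ne_zero.mpr hn.ne')]
    have := hconv.sum_mem hw hw1 hmem
    rwa [← Finset.smul_sum, h, smul_zero] at this
  exact h0

lemma orthonormal_cons {n : ℕ} {u : E} (hu : ‖u‖ = 1)
    (f : Fin n → ((ℂ ∙ u)ᗮ : Submodule ℂ E)) (hf : Orthonormal ℂ f) :
    Orthonormal ℂ (Fin.cons u (fun i => (f i : E)) : Fin (n+1) → E) := by
  classical
  have huf : ∀ k, ⟪u, (f k : E)⟫ = 0 := by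
    intro k
    exact (Submodule.mem_orthogonal _ _).mp (f k).2 u (Submodule.mem_span_singleton_self u)
  rw [orthonormal_iff_ite]
  intro i j
  refine Fin.cases ?_ ?_ i
  · refine Fin.cases ?_ ?_ j
    · simp only [Fin.cons_zero, if_pos rfl]
      rw [inner_self_eq_norm_sq_to_K, hu]; norm_num
    · intro k
      simp only [Fin.cons_zero, Fin.cons_succ]
      rw [huf k, if_neg (by simp [Fin.ext_iff])]
  · intro k
    refine Fin.cases ?_ ?_ j
    · simp only [Fin.cons_zero, Fin.cons_succ]
      rw [← inner_conj_symm, huf k, map_zero, if_neg (by simp [Fin.ext_iff])]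
    · intro l
      simp only [Fin.cons_succ]
      rw [← Submodule.coe_inner, orthonormal_iff_ite.mp hf k l]
      simp [Fin.ext_iff]

noncomputable def onbOfOrthonormal {ι : Type*} [Fintype ι] [Nonempty ι] [FiniteDimensional ℂ E]
    {v : ι → E} (hv : Orthonormal ℂ v) (hc : Fintype.card ι = finrank ℂ E) :
    OrthonormalBasis ι ℂ E :=
  (basisOfOrthonormalOfCardEqFinrank hv hc).toOrthonormalBasis
    (by rwa [coe_basisOfOrthonormalOfCardEqFinrank])

lemma coe_onbOfOrthonormal {ι : Type*} [Fintype ι] [Nonempty ι] [FiniteDimensional ℂ E]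
    {v : ι → E} (hv : Orthonormal ℂ v) (hc : Fintype.card ι = finrank ℂ E) :
    ⇑(onbOfOrthonormal hv hc) = v := by
  rw [onbOfOrthonormal, Basis.coe_toOrthonormalBasis, coe_basisOfOrthonormalOfCardEqFinrank]

lemma inner_orthProj [FiniteDimensional ℂ E] (F : Submodule ℂ E) (w : F) (x : E) :
    (⟪w, F.orthogonalProjectionOnto x⟫ : ℂ) = ⟪(w : E), x⟫ := by
  have h := F.starProjection_inner_eq_zero x w w.2
  rw [inner_sub_left] at h
  rw [Submodule.coe_inner, Submodule.coe_orthogonalProjectionOnto_apply, ← inner_conj_symm, ← sub_eq_zero.mp h, inner_conj_symm]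

end Aux

lemma exists_onb_zero_diag (n : ℕ) :
    ∀ {E : Type} [NormedAddCommGroup E] [InnerProductSpace ℂ E] [FiniteDimensional ℂ E]
    (T : E →ₗ[ℂ] E) (b0 : OrthonormalBasis (Fin n) ℂ E),
    ∑ i, ⟪b0 i, T (b0 i)⟫ = 0 →
    ∃ b : OrthonormalBasis (Fin n) ℂ E, ∀ i, ⟪b i, T (b i)⟫ = 0 := by
  induction n with
  | zero =>
    intro E _ _ _ T b0 _
    exact ⟨b0, fun i => i.elim0⟩
  | succ n ih =>
    intro E _ _ _ T b0 h
    obtain ⟨u, hu, hqu⟩ := exists_unit_inner_zero (Nat.succ_pos n) T b0 h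
    have hune : u ≠ 0 := by
      intro h0; rw [h0, norm_zero] at hu; exact one_ne_zero hu.symm
    have hrankE : finrank ℂ E = n + 1 := by
      rw [finrank_eq_card_basis b0.toBasis, Fintype.card_fin]
    haveI : Fact (finrank ℂ E = n + 1) := ⟨hrankE⟩
    set F : Submodule ℂ E := (ℂ ∙ u)ᗮ with hF
    let f0 : OrthonormalBasis (Fin n) ℂ F :=
      OrthonormalBasis.fromOrthogonalSpanSingleton n hune
    let S : F →ₗ[ℂ] F :=
      ((F.orthogonalProjectionOnto).toLinearMap).comp (T.comp F.subtype)
    have hST : ∀ v : F, (⟪v, S v⟫ : ℂ) = ⟪(v : E), T (v : E)⟫ := fun v =>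
      inner_orthProj F v (T (v : E))
    have hcard : Fintype.card (Fin (n+1)) = finrank ℂ E := by
      rw [Fintype.card_fin, hrankE]
    have honb : Orthonormal ℂ (Fin.cons u (fun i => (f0 i : E)) : Fin (n+1) → E) :=
      orthonormal_cons hu f0 f0.orthonormal
    let g0 : OrthonormalBasis (Fin (n+1)) ℂ E := onbOfOrthonormal honb hcard
    have hg0 : ⇑g0 = Fin.cons u (fun i => (f0 i : E)) := coe_onbOfOrthonormal honb hcard
    have hsumg : ∑ i, ⟪g0 i, T (g0 i)⟫ = 0 := by
      rw [← sum_inner_map_eq b0 g0 T]; exact h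
    have hsumf : ∑ i : Fin n, ⟪(f0 i : E), T (f0 i : E)⟫ = 0 := by
      rw [hg0] at hsumg
      rw [Fin.sum_univ_succ] at hsumg
      simp only [Fin.cons_zero, Fin.cons_succ] at hsumg
      rw [hqu, zero_add] at hsumg
      exact hsumg
    have hsumS : ∑ i, ⟪f0 i, S (f0 i)⟫ = 0 := by
      rw [Finset.sum_congr rfl fun i _ => hST (f0 i)]
      exact hsumf
    obtain ⟨f, hf⟩ := ih S f0 hsumS
    have honb2 : Orthonormal ℂ (Fin.cons u (fun i => (f i : E)) : Fin (n+1) → E) :=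
      orthonormal_cons hu f f.orthonormal
    refine ⟨onbOfOrthonormal honb2 hcard, ?_⟩
    intro i
    rw [coe_onbOfOrthonormal honb2 hcard]
    refine Fin.cases ?_ ?_ i
    · simpa using hqu
    · intro k
      simp only [Fin.cons_succ]
      rw [← hST (f k)]
      exact hf k

/-- Walgate–Short–Hardy–Vedral: for any two orthogonal bipartite pure states there is an
orthonormal basis of Alice's system such that all corresponding conditional states of
Bob's system are orthogonal. -/
theorem exists_orthonormalBasis_condState_orthogonal (dA dB : ℕ) (hdA : 1 ≤ dA)
    (hdB : 1 ≤ dB) (ψ φ : EuclideanSpace ℂ (Fin dA × Fin dB))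
    (hψ : ‖ψ‖ = 1) (hφ : ‖φ‖ = 1) (horth : ⟪φ, ψ⟫ = 0) :
    ∃ v : OrthonormalBasis (Fin dA) ℂ (EuclideanSpace ℂ (Fin dA)),
      ∀ i : Fin dA, ⟪condState φ (v i), condState ψ (v i)⟫ = 0 := by
  classical
  haveI : Nonempty (Fin dA) := Fin.pos_iff_nonempty.mp hdA
  set T : EuclideanSpace ℂ (Fin dA) →ₗ[ℂ] EuclideanSpace ℂ (Fin dA) :=
    { toFun := fun w => WithLp.toLp 2 (fun a => ∑ b : Fin dA,
        (∑ j : Fin dB, (starRingEnd ℂ) (φ (a, j)) * ψ (b, j)) * w b :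
          Fin dA → ℂ)
      map_add' := by
        intro w₁ w₂
        ext a
        simp only [PiLp.add_apply, PiLp.toLp_apply]
        rw [← Finset.sum_add_distrib]
        apply Finset.sum_congr rfl
        intro b _
        ring
      map_smul' := by
        intro c w
        ext a
        simp only [PiLp.smul_apply, PiLp.toLp_apply, smul_eq_mul, RingHom.id_apply]
        rw [Finset.mul_sum]
        apply Finset.sum_congr rfl
        intro b _
        ring } with hT
  have hTapp : ∀ (w : EuclideanSpace ℂ (Fin dA)) (a : Fin dA),
      T w a = ∑ b : Fin dA, (∑ j : Fin dB, (starRingEnd ℂ) (φ (a, j)) * ψ (b, j)) * w b :=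
    fun w a => rfl
  -- trace condition
  have hb0 : ∑ a, ⟪(EuclideanSpace.basisFun (Fin dA) ℂ) a,
      T ((EuclideanSpace.basisFun (Fin dA) ℂ) a)⟫ = 0 := by
    have key : ∀ a : Fin dA, ⟪(EuclideanSpace.basisFun (Fin dA) ℂ) a,
        T ((EuclideanSpace.basisFun (Fin dA) ℂ) a)⟫
        = ∑ j : Fin dB, (starRingEnd ℂ) (φ (a, j)) * ψ (a, j) := by
      intro a
      rw [PiLp.inner_apply]
      simp only [EuclideanSpace.basisFun_apply, hTapp, EuclideanSpace.single_apply]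
      rw [Finset.sum_eq_single a]
      · simp
      · intro b _ hb
        simp [hb]
      · simp
    have hps : ∑ a : Fin dA, ∑ j : Fin dB, (starRingEnd ℂ) (φ (a, j)) * ψ (a, j)
        = ⟪φ, ψ⟫ := by
      rw [PiLp.inner_apply, Fintype.sum_prod_type]
      simp only [RCLike.inner_apply']
    rw [Finset.sum_congr rfl fun a _ => key a, hps]
    exact horth
  obtain ⟨b, hb⟩ := exists_onb_zero_diag dA T (EuclideanSpace.basisFun (Fin dA) ℂ) hb0
  -- conjugate family
  set v : Fin dA → EuclideanSpace ℂ (Fin dA) :=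
    fun i => WithLp.toLp 2 (fun a => (starRingEnd ℂ) (b i a) : Fin dA → ℂ) with hv
  have hinner : ∀ i j, ⟪v i, v j⟫ = ⟪b j, b i⟫ := by
    intro i j
    rw [hv, PiLp.inner_apply, PiLp.inner_apply]
    apply Finset.sum_congr rfl
    intro a _
    simp only [RCLike.inner_apply, Complex.conj_conj]
    ring
  have honb : Orthonormal ℂ v := by
    rw [orthonormal_iff_ite]
    intro i j
    rw [hinner i j, orthonormal_iff_ite.mp b.orthonormal j i]
    simp [eq_comm]
  have hcard : Fintype.card (Fin dA) = finrank ℂ (EuclideanSpace ℂ (Fin dA)) := by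
    simp [finrank_euclideanSpace_fin]
  refine ⟨onbOfOrthonormal honb hcard, ?_⟩
  intro i
  rw [coe_onbOfOrthonormal honb hcard]
  have hcond : ∀ (χ : EuclideanSpace ℂ (Fin dA × Fin dB)) (j : Fin dB),
      condState χ (v i) j = ∑ a : Fin dA, b i a * χ (a, j) := by
    intro χ j
    rw [condState, PiLp.toLp_apply]
    apply Finset.sum_congr rfl
    intro a _
    rw [hv]
    simp only [PiLp.toLp_apply, Complex.conj_conj]
  have main : ⟪condState φ (v i), condState ψ (v i)⟫ = ⟪b i, T (b i)⟫ := by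
    rw [PiLp.inner_apply, PiLp.inner_apply]
    simp only [RCLike.inner_apply']
    calc ∑ j, (starRingEnd ℂ) (condState φ (v i) j) * condState ψ (v i) j
        = ∑ j : Fin dB, ∑ a : Fin dA, ∑ c : Fin dA,
            (starRingEnd ℂ) (b i a) * (starRingEnd ℂ) (φ (a, j)) * (b i c * ψ (c, j)) := by
          apply Finset.sum_congr rfl
          intro j _
          rw [hcond φ j, hcond ψ j, map_sum, Finset.sum_mul_sum]
          apply Finset.sum_congr rfl
          intro a _
          apply Finset.sum_congr rfl
          intro c _
          rw [map_mul]
      _ = ∑ a : Fin dA, ∑ c : Fin dA, ∑ j : Fin dB,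
            (starRingEnd ℂ) (b i a) * (starRingEnd ℂ) (φ (a, j)) * (b i c * ψ (c, j)) := by
          rw [Finset.sum_comm]
          apply Finset.sum_congr rfl
          intro a _
          rw [Finset.sum_comm]
      _ = ∑ a, (starRingEnd ℂ) (b i a) * T (b i) a := by
          apply Finset.sum_congr rfl
          intro a _
          rw [hTapp]
          rw [Finset.mul_sum]
          apply Finset.sum_congr rfl
          intro c _
          rw [Finset.sum_mul, Finset.mul_sum]
          apply Finset.sum_congr rfl
          intro j _
          ring
  rw [main]
  exact hb i
end

section
/- Let dA ≥ 1, let E be a complex inner product space that is a Hilbert space, and let ψ, φ : Fin dA → E satisfy ∑_{a} ⟪φ a, ψ a⟫ = 0 (orthogonality of the corresponding vectors in the ℓ²-direct sum of dA copies of E). Then there exists an orthonormal basis (v_i)_{i : Fin dA} of EuclideanSpace ℂ (Fin dA) such that for every i, ⟪∑_a conj (v_i a) • φ a, ∑_a conj (v_i a) • ψ a⟫ = 0 in E. -/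
local notation "⟪" x ", " y "⟫" => @inner ℂ _ _ x y

open Complex

/-- Numeric core: 2x2 numerical-range segment lemma. -/
lemma key_num (α β p q : ℂ) (t : ℝ) (ht0 : 0 ≤ t) (ht1 : t ≤ 1) :
    ∃ c d : ℂ, (starRingEnd ℂ) c * c + (starRingEnd ℂ) d * d = 1 ∧
      (starRingEnd ℂ) c * c * α + (starRingEnd ℂ) c * d * p
        + (starRingEnd ℂ) d * c * q + (starRingEnd ℂ) d * d * β
        = (t : ℂ) * α + (1 - (t : ℂ)) * β := by
  by_cases hαβ : α = β
  · refine ⟨1, 0, by simp, ?_⟩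
    simp only [map_one, map_zero, one_mul, mul_zero, zero_mul, mul_one, add_zero, zero_add]
    linear_combination (1 - (t : ℂ)) * hαβ
  · set γ : ℂ := (α - β) / 2 with hγdef
    have hγ : γ ≠ 0 := by
      simp only [hγdef, div_ne_zero_iff, sub_ne_zero]
      exact ⟨hαβ, two_ne_zero⟩
    -- find φ₀ with Im(z/γ) = 0
    set g : ℝ → ℝ := fun φ =>
      ((Complex.exp (φ * I) * p + Complex.exp (-(φ * I)) * q) / γ).im with hgdef
    have hgcont : Continuous g := by
      apply Complex.continuous_im.comp
      apply Continuous.div_const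
      fun_prop
    have hg0 : g 0 = ((p + q) / γ).im := by simp [hgdef]
    have hgπ : g Real.pi = -(((p + q) / γ).im) := by
      simp only [hgdef]
      rw [Complex.exp_neg, Complex.exp_pi_mul_I]
      rw [show (-1 : ℂ) * p + (-1 : ℂ)⁻¹ * q = -(p + q) by ring, neg_div, Complex.neg_im]
    have hπpos : (0 : ℝ) ≤ Real.pi := Real.pi_pos.le
    have hex : ∃ φ₀, g φ₀ = 0 := by
      rcases le_total (g 0) 0 with h0 | h0
      · have : (0 : ℝ) ∈ Set.Icc (g 0) (g Real.pi) := ⟨h0, by rw [hgπ]; linarith [hg0 ▸ h0]⟩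
        obtain ⟨φ₀, _, hφ₀⟩ := intermediate_value_Icc hπpos hgcont.continuousOn this
        exact ⟨φ₀, hφ₀⟩
      · have : (0 : ℝ) ∈ Set.Icc (g Real.pi) (g 0) := ⟨by rw [hgπ]; linarith [hg0 ▸ h0], h0⟩
        obtain ⟨φ₀, _, hφ₀⟩ := intermediate_value_Icc' hπpos hgcont.continuousOn this
        exact ⟨φ₀, hφ₀⟩
    obtain ⟨φ₀, hφ₀⟩ := hex
    set Eₑ : ℂ := Complex.exp (φ₀ * I) with hE
    set E' : ℂ := Complex.exp (-(φ₀ * I)) with hE'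
    have hEE' : Eₑ * E' = 1 := by
      rw [hE, hE', Complex.exp_neg]
      exact mul_inv_cancel₀ (Complex.exp_ne_zero _)
    set z : ℂ := Eₑ * p + E' * q with hz
    set r : ℝ := (z / γ).re with hr
    have hzim : (z / γ).im = 0 := hφ₀
    have hzr : z = (r : ℂ) * γ := by
      have h1 : z / γ = (r : ℂ) := Complex.ext rfl (by simpa using hzim)
      rw [← h1, div_mul_cancel₀ _ hγ]
    -- find θ
    set s : ℝ := 2 * t - 1 with hs
    set h : ℝ → ℝ := fun x => Real.cos x + r / 2 * Real.sin x with hh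
    have hhcont : Continuous h := by fun_prop
    have hh0 : h 0 = 1 := by simp [hh]
    have hhπ : h Real.pi = -1 := by simp [hh]
    have hmem : s ∈ Set.Icc (h Real.pi) (h 0) := by
      rw [hh0, hhπ]; constructor <;> [skip; skip] <;> simp [hs] <;> linarith
    obtain ⟨x₀, _, hx₀⟩ := intermediate_value_Icc' hπpos hhcont.continuousOn hmem
    set cθ : ℝ := Real.cos (x₀ / 2) with hcθ
    set sθ : ℝ := Real.sin (x₀ / 2) with hsθ
    have hP : cθ ^ 2 + sθ ^ 2 = 1 := by
      rw [hcθ, hsθ]; rw [add_comm]; exact Real.sin_sq_add_cos_sq _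
    have hx2 : x₀ = 2 * (x₀ / 2) := by ring
    have hER : cθ ^ 2 + r * sθ * cθ / 2 = t := by
      have h1 : Real.cos (2 * (x₀ / 2)) + r / 2 * Real.sin (2 * (x₀ / 2)) = s := by
        rw [← hx2]; exact hx₀
      rw [Real.cos_two_mul, Real.sin_two_mul] at h1
      rw [hs] at h1
      nlinarith [h1]
    have hP2 : (cθ : ℂ) ^ 2 + (sθ : ℂ) ^ 2 = 1 := by exact_mod_cast hP
    have hE2 : (cθ : ℂ) ^ 2 + (r : ℂ) * (sθ : ℂ) * (cθ : ℂ) / 2 = (t : ℂ) := by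
      exact_mod_cast hER
    refine ⟨(cθ : ℂ), Eₑ * (sθ : ℂ), ?_, ?_⟩
    · have hconjE : (starRingEnd ℂ) Eₑ = E' := by
        rw [hE, hE', ← Complex.exp_conj]
        congr 1
        simp [Complex.conj_ofReal]
      simp only [map_mul, Complex.conj_ofReal, hconjE]
      linear_combination (sθ : ℂ) ^ 2 * hEE' + hP2 - hE2 + hE2
    · have hconjE : (starRingEnd ℂ) Eₑ = E' := by
        rw [hE, hE', ← Complex.exp_conj]
        congr 1
        simp [Complex.conj_ofReal]
      simp only [map_mul, Complex.conj_ofReal, hconjE]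
      have hz2 : Eₑ * p + E' * q = (r : ℂ) * ((α - β) / 2) := by
        rw [← hz, hzr, hγdef]
      linear_combination ((cθ : ℂ) * (sθ : ℂ)) * hz2 + ((sθ : ℂ)^2 * β) * hEE'
        + (α - β) * hE2 + β * hP2


open Complex


section helpers

variable {V : Type*} [NormedAddCommGroup V] [InnerProductSpace ℂ V]

lemma inner_expand (A : V →ₗ[ℂ] V) (u w : V) (c d : ℂ) :
    ⟪c • u + d • w, A (c • u + d • w)⟫ =
      (starRingEnd ℂ) c * c * ⟪u, A u⟫ + (starRingEnd ℂ) c * d * ⟪u, A w⟫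
        + (starRingEnd ℂ) d * c * ⟪w, A u⟫ + (starRingEnd ℂ) d * d * ⟪w, A w⟫ := by
  simp only [map_add, map_smul, inner_add_left, inner_add_right, inner_smul_left,
    inner_smul_right]
  ring

lemma trace_indep {ι κ : Type*} [Fintype ι] [Fintype κ]
    (e : OrthonormalBasis ι ℂ V) (f : OrthonormalBasis κ ℂ V) (A : V →ₗ[ℂ] V) :
    ∑ i, ⟪f i, A (f i)⟫ = ∑ j, ⟪e j, A (e j)⟫ := by
  classical
  have hoe := orthonormal_iff_ite.mp e.orthonormal
  have step2 : ∀ (x : V) (j : ι), ⟪e j, A x⟫ = ∑ k, ⟪e k, x⟫ * ⟪e j, A (e k)⟫ := by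
    intro x j
    conv_lhs => rw [← e.sum_repr' x]
    simp [map_sum, map_smul, inner_sum, inner_smul_right]
  calc ∑ i, ⟪f i, A (f i)⟫
      = ∑ i, ∑ j, ⟪f i, e j⟫ * ⟪e j, A (f i)⟫ :=
        Finset.sum_congr rfl fun i _ => (e.sum_inner_mul_inner _ _).symm
    _ = ∑ i, ∑ j, ∑ k, ⟪f i, e j⟫ * (⟪e k, f i⟫ * ⟪e j, A (e k)⟫) := by
        refine Finset.sum_congr rfl fun i _ => Finset.sum_congr rfl fun j _ => ?_
        rw [step2 (f i) j, Finset.mul_sum]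
    _ = ∑ j, ∑ k, (∑ i, ⟪e k, f i⟫ * ⟪f i, e j⟫) * ⟪e j, A (e k)⟫ := by
        rw [Finset.sum_comm]
        refine Finset.sum_congr rfl fun j _ => ?_
        rw [Finset.sum_comm]
        refine Finset.sum_congr rfl fun k _ => ?_
        rw [Finset.sum_mul]
        exact Finset.sum_congr rfl fun i _ => by ring
    _ = ∑ j, ∑ k, ⟪e k, e j⟫ * ⟪e j, A (e k)⟫ := by
        refine Finset.sum_congr rfl fun j _ => Finset.sum_congr rfl fun k _ => ?_
        rw [f.sum_inner_mul_inner]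
    _ = ∑ j, ⟪e j, A (e j)⟫ := by
        refine Finset.sum_congr rfl fun j _ => ?_
        rw [Finset.sum_eq_single j]
        · rw [hoe j j, if_pos rfl, one_mul]
        · intro k _ hk
          rw [hoe k j, if_neg hk, zero_mul]
        · intro h; exact absurd (Finset.mem_univ j) h

lemma exists_unit_vector (A : V →ₗ[ℂ] V) (N : ℕ) (hN : 1 ≤ N) (e : ℕ → V)
    (hnorm : ∀ i, i < N → ⟪e i, e i⟫ = 1)
    (horth : ∀ i, i < N → ∀ j, j < N → i ≠ j → ⟪e i, e j⟫ = 0)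
    (htr : ∑ i ∈ Finset.range N, ⟪e i, A (e i)⟫ = 0) :
    ∃ v : V, ⟪v, v⟫ = 1 ∧ ⟪v, A v⟫ = 0 := by
  obtain ⟨M, rfl⟩ : ∃ M, N = M + 1 := ⟨N - 1, (Nat.succ_pred_eq_of_pos hN).symm⟩
  have key : ∀ k, k < M + 1 → ∃ v : V, ⟪v, v⟫ = 1 ∧
      (∀ j, k < j → j < M + 1 → ⟪v, e j⟫ = 0) ∧
      ((k : ℂ) + 1) * ⟪v, A v⟫ = ∑ i ∈ Finset.range (k + 1), ⟪e i, A (e i)⟫ := by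
    intro k
    induction k with
    | zero =>
      intro _
      exact ⟨e 0, hnorm 0 (by omega),
        fun j hj hjN => horth 0 (by omega) j hjN (by omega), by simp⟩
    | succ k ih =>
      intro hk1
      obtain ⟨v, hv1, hvorth, hvtr⟩ := ih (by omega)
      set w := e (k + 1) with hwdef
      have hw1 : ⟪w, w⟫ = 1 := hnorm _ hk1
      have hvw : ⟪v, w⟫ = 0 := hvorth (k + 1) (by omega) hk1
      have hwv : ⟪w, v⟫ = 0 := by rw [← inner_conj_symm, hvw, map_zero]
      set t : ℝ := (k + 1) / (k + 2) with ht
      have ht0 : 0 ≤ t := by positivity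
      have ht1 : t ≤ 1 := by
        rw [ht, div_le_one (by positivity)]; linarith
      obtain ⟨c, d, hcd1, hcd2⟩ := key_num ⟪v, A v⟫ ⟪w, A w⟫ ⟪v, A w⟫ ⟪w, A v⟫ t ht0 ht1
      refine ⟨c • v + d • w, ?_, ?_, ?_⟩
      · have hexp : ⟪c • v + d • w, c • v + d • w⟫
            = (starRingEnd ℂ) c * c + (starRingEnd ℂ) d * d := by
          simp only [inner_add_left, inner_add_right, inner_smul_left, inner_smul_right,
            hv1, hw1, hvw, hwv]
          ring
        rw [hexp, hcd1]
      · intro j hj hjN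
        have h1 : ⟪v, e j⟫ = 0 := hvorth j (by omega) hjN
        have h2 : ⟪w, e j⟫ = 0 := horth (k + 1) hk1 j hjN (by omega)
        simp [inner_add_left, inner_smul_left, h1, h2]
      · rw [inner_expand A v w c d, hcd2, Finset.sum_range_succ, ← hvtr]
        have h2 : ((k : ℂ) + 2) ≠ 0 := by
          have : ((k + 2 : ℕ) : ℂ) ≠ 0 := Nat.cast_ne_zero.mpr (by omega)
          push_cast at this; exact this
        have htc : (t : ℂ) = ((k : ℂ) + 1) / ((k : ℂ) + 2) := by
          rw [ht]; push_cast; ring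
        rw [htc]
        push_cast
        field_simp
        ring
  obtain ⟨v, hv1, _, hvtr⟩ := key M (by omega)
  rw [htr] at hvtr
  have hM : ((M : ℂ) + 1) ≠ 0 := by
    have : ((M + 1 : ℕ) : ℂ) ≠ 0 := Nat.cast_ne_zero.mpr (by omega)
    push_cast at this; exact this
  exact ⟨v, hv1, (mul_eq_zero.mp hvtr).resolve_left hM⟩

end helpers

section consbasis

variable {V : Type*} [NormedAddCommGroup V] [InnerProductSpace ℂ V]

lemma cons_orthonormalBasis [FiniteDimensional ℂ V] {n : ℕ}
    (hV : Module.finrank ℂ V = n + 1) (v : V) (hv : ⟪v, v⟫ = 1) (g : Fin n → V)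
    (hg_mem : ∀ i, g i ∈ (ℂ ∙ v)ᗮ) (hg : Orthonormal ℂ g) :
    ∃ f : OrthonormalBasis (Fin (n + 1)) ℂ V, f 0 = v ∧ ∀ i : Fin n, f i.succ = g i := by
  classical
  set F : Fin (n + 1) → V := Fin.cons v g with hF
  have hgi := orthonormal_iff_ite.mp hg
  have hvg : ∀ j, ⟪v, g j⟫ = 0 := fun j =>
    (Submodule.mem_orthogonal _ _).mp (hg_mem j) v (Submodule.mem_span_singleton_self v)
  have horthF : Orthonormal ℂ F := by
    rw [orthonormal_iff_ite]
    intro i j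
    refine Fin.cases ?_ (fun i' => ?_) i
    · refine Fin.cases ?_ (fun j' => ?_) j
      · simpa [hF] using hv
      · rw [hF]
        simp only [Fin.cons_zero, Fin.cons_succ]
        rw [if_neg (Ne.symm (Fin.succ_ne_zero j'))]
        exact hvg j'
    · refine Fin.cases ?_ (fun j' => ?_) j
      · rw [hF]
        simp only [Fin.cons_zero, Fin.cons_succ]
        rw [if_neg (Fin.succ_ne_zero i')]
        rw [← inner_conj_symm, hvg i', map_zero]
      · rw [hF]
        simp only [Fin.cons_succ]
        rw [hgi i' j']
        simp [Fin.succ_inj]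
  have hli := horthF.linearIndependent
  have hspan : ⊤ ≤ Submodule.span ℂ (Set.range F) :=
    (hli.span_eq_top_of_card_eq_finrank (by simp [hV])).ge
  refine ⟨OrthonormalBasis.mk horthF hspan, ?_, ?_⟩
  · rw [OrthonormalBasis.coe_mk, hF, Fin.cons_zero]
  · intro i
    rw [OrthonormalBasis.coe_mk, hF, Fin.cons_succ]

end consbasis

lemma diag_zero : ∀ (n : ℕ) {V : Type} [NormedAddCommGroup V] [InnerProductSpace ℂ V]
    (A : V →ₗ[ℂ] V) (e : OrthonormalBasis (Fin n) ℂ V),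
    (∑ i, ⟪e i, A (e i)⟫ = 0) →
    ∃ f : OrthonormalBasis (Fin n) ℂ V, ∀ i, ⟪f i, A (f i)⟫ = 0 := by
  intro n
  induction n with
  | zero =>
    intro V _ _ A e _
    exact ⟨e, fun i => i.elim0⟩
  | succ n ih =>
    intro V _inst1 _inst2 A e htr
    classical
    haveI : FiniteDimensional ℂ V := Module.Finite.of_basis e.toBasis
    have hrank : Module.finrank ℂ V = n + 1 := by
      rw [Module.finrank_eq_card_basis e.toBasis, Fintype.card_fin]
    have hoe := orthonormal_iff_ite.mp e.orthonormal
    set e' : ℕ → V := fun k => if h : k < n + 1 then e ⟨k, h⟩ else 0 with he'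
    obtain ⟨v, hv1, hv0⟩ := exists_unit_vector A (n + 1) (by omega) e'
      (by
        intro i hi
        simp only [he', dif_pos hi]
        rw [hoe]
        simp)
      (by
        intro i hi j hj hij
        simp only [he', dif_pos hi, dif_pos hj]
        rw [hoe]
        simp [Fin.mk.injEq, hij])
      (by
        rw [← Fin.sum_univ_eq_sum_range (fun k => ⟪e' k, A (e' k)⟫) (n + 1), ← htr]
        refine Finset.sum_congr rfl fun i _ => ?_
        simp only [he', dif_pos i.isLt, Fin.eta])
    have hvne : v ≠ 0 := by
      intro h
      rw [h, inner_zero_left] at hv1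
      exact zero_ne_one hv1
    have hrankK : Module.finrank ℂ ((ℂ ∙ v)ᗮ : Submodule ℂ V) = n := by
      have h1 := Submodule.finrank_add_finrank_orthogonal (K := (ℂ ∙ v : Submodule ℂ V))
      rw [finrank_span_singleton hvne, hrank] at h1
      omega
    set K : Submodule ℂ V := (ℂ ∙ v)ᗮ with hK
    set g : OrthonormalBasis (Fin n) ℂ K := (stdOrthonormalBasis ℂ K).reindex (finCongr hrankK)
    set A' : K →ₗ[ℂ] K := (Submodule.orthogonalProjectionOnto K).toLinearMap ∘ₗ A ∘ₗ K.subtype with hA'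
    have hA'apply : ∀ x : K, ⟪x, A' x⟫ = ⟪(x : V), A (x : V)⟫ := by
      intro x
      rw [hA']
      simp only [LinearMap.coe_comp, Function.comp_apply, ContinuousLinearMap.coe_coe,
        Submodule.coe_subtype]
      exact Submodule.inner_orthogonalProjectionOnto_eq_of_mem_left (K := K) x (A (x : V))
    have hgco : Orthonormal ℂ (fun i => (g i : V)) := by
      rw [orthonormal_iff_ite]
      intro i j
      rw [← Submodule.coe_inner]
      exact orthonormal_iff_ite.mp g.orthonormal i j
    obtain ⟨f₀, hf₀0, hf₀succ⟩ := cons_orthonormalBasis hrank v hv1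
      (fun i => (g i : V)) (fun i => (g i).2) hgco
    have htr' : ∑ i, ⟪g i, A' (g i)⟫ = 0 := by
      have h1 : ∑ i, ⟪f₀ i, A (f₀ i)⟫ = 0 := by rw [trace_indep e f₀ A, htr]
      rw [Fin.sum_univ_succ, hf₀0, hv0] at h1
      calc ∑ i, ⟪g i, A' (g i)⟫
          = ∑ i : Fin n, ⟪f₀ i.succ, A (f₀ i.succ)⟫ := by
            refine Finset.sum_congr rfl fun i _ => ?_
            rw [hA'apply (g i), hf₀succ i]
        _ = 0 := by linear_combination h1
    obtain ⟨g', hg'⟩ := ih A' g htr'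
    have hg'co : Orthonormal ℂ (fun i => (g' i : V)) := by
      rw [orthonormal_iff_ite]
      intro i j
      rw [← Submodule.coe_inner]
      exact orthonormal_iff_ite.mp g'.orthonormal i j
    obtain ⟨f, hf0, hfsucc⟩ := cons_orthonormalBasis hrank v hv1
      (fun i => (g' i : V)) (fun i => (g' i).2) hg'co
    refine ⟨f, fun i => ?_⟩
    refine Fin.cases ?_ (fun i' => ?_) i
    · rw [hf0]; exact hv0
    · rw [hfsucc i', ← hA'apply (g' i'), hg' i']

/-- Walgate et al. theorem for a finite-dimensional system `A` and an arbitrary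
(possibly infinite-dimensional) Hilbert space `B = E`: if the bipartite vectors
`ψ, φ : Fin dA → E` are orthogonal (in the ℓ²-direct sum inner product), then there is
an orthonormal basis `(v i)` of `ℂ^dA` such that all conditional states are orthogonal. -/
theorem exists_orthonormalBasis_condState_orthogonal_hilbert (dA : ℕ) (hdA : 1 ≤ dA)
    {E : Type*} [NormedAddCommGroup E] [InnerProductSpace ℂ E] [CompleteSpace E]
    (ψ φ : Fin dA → E) (horth : ∑ a : Fin dA, ⟪φ a, ψ a⟫ = 0) :
    ∃ v : OrthonormalBasis (Fin dA) ℂ (EuclideanSpace ℂ (Fin dA)),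
      ∀ i : Fin dA,
        ⟪∑ a : Fin dA, (starRingEnd ℂ) (v i a) • φ a,
          ∑ a : Fin dA, (starRingEnd ℂ) (v i a) • ψ a⟫ = 0 := by
  classical
  set M : Fin dA → Fin dA → ℂ := fun a b => ⟪φ a, ψ b⟫ with hM
  set A : EuclideanSpace ℂ (Fin dA) →ₗ[ℂ] EuclideanSpace ℂ (Fin dA) :=
    { toFun := fun x => WithLp.toLp 2 (fun a => ∑ b, (starRingEnd ℂ) (M a b) * x b :
        Fin dA → ℂ)
      map_add' := by
        intro x y
        ext a
        simp only [PiLp.add_apply, PiLp.toLp_apply, mul_add, Finset.sum_add_distrib]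
      map_smul' := by
        intro c x
        ext a
        simp only [PiLp.smul_apply, PiLp.toLp_apply, smul_eq_mul, RingHom.id_apply, Finset.mul_sum]
        exact Finset.sum_congr rfl fun b _ => by ring } with hA
  have hAapply : ∀ (x : EuclideanSpace ℂ (Fin dA)) (a : Fin dA),
      A x a = ∑ b, (starRingEnd ℂ) (M a b) * x b := fun x a => rfl
  have htr : ∑ i, ⟪(EuclideanSpace.basisFun (Fin dA) ℂ) i,
      A ((EuclideanSpace.basisFun (Fin dA) ℂ) i)⟫ = 0 := by
    have h1 : ∀ i : Fin dA, ⟪(EuclideanSpace.basisFun (Fin dA) ℂ) i,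
        A ((EuclideanSpace.basisFun (Fin dA) ℂ) i)⟫ = (starRingEnd ℂ) (M i i) := by
      intro i
      rw [PiLp.inner_apply]
      simp only [EuclideanSpace.basisFun_apply, RCLike.inner_apply, hAapply,
        EuclideanSpace.single_apply]
      rw [Finset.sum_eq_single i]
      · simp [Finset.sum_ite_eq']
      · intro b _ hb
        simp [hb]
      · intro h; exact absurd (Finset.mem_univ i) h
    rw [Finset.sum_congr rfl fun i _ => h1 i, ← map_sum]
    have h2 : ∑ i, M i i = 0 := horth
    rw [h2, map_zero]
  obtain ⟨f, hf⟩ := diag_zero dA A (EuclideanSpace.basisFun (Fin dA) ℂ) htr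
  refine ⟨f, fun i => ?_⟩
  have hexp : ⟪∑ a, (starRingEnd ℂ) (f i a) • φ a, ∑ a, (starRingEnd ℂ) (f i a) • ψ a⟫
      = (starRingEnd ℂ) ⟪f i, A (f i)⟫ := by
    calc ⟪∑ a, (starRingEnd ℂ) (f i a) • φ a, ∑ a, (starRingEnd ℂ) (f i a) • ψ a⟫
        = ∑ a, ∑ b, f i a * ((starRingEnd ℂ) (f i b) * M a b) := by
          rw [sum_inner]
          refine Finset.sum_congr rfl fun a _ => ?_
          rw [inner_smul_left, starRingEnd_self_apply, inner_sum, Finset.mul_sum]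
          refine Finset.sum_congr rfl fun b _ => ?_
          rw [inner_smul_right]
      _ = (starRingEnd ℂ) ⟪f i, A (f i)⟫ := by
          rw [PiLp.inner_apply, map_sum]
          refine Finset.sum_congr rfl fun a _ => ?_
          simp only [RCLike.inner_apply, hAapply, map_mul, starRingEnd_self_apply, map_sum,
            Finset.mul_sum, Finset.sum_mul]
          refine Finset.sum_congr rfl fun b _ => ?_
          ring
  rw [hexp, hf i, map_zero]
end

section
/- Let dA, dB ≥ 1, let ψ, φ : EuclideanSpace ℂ (Fin dA × Fin dB), and define the matrices M_ψ, M_φ : Matrix (Fin dB) (Fin dA) ℂ by M_ψ j a = ψ (a, j) and M_φ j a = φ (a, j). Let U ∈ Matrix.unitaryGroup (Fin dA) ℂ be such that every diagonal entry of U * (M_φᴴ * M_ψ) * Uᴴ is zero. For each i : Fin dA let w_i : EuclideanSpace ℂ (Fin dA) be the i-th row of U, w_i a = U i a. Then (w_i)_{i : Fin dA} is an orthonormal basis of EuclideanSpace ℂ (Fin dA), and for every i the conditional states satisfy ⟪φ^{|w_i}, ψ^{|w_i}⟫ = 0. -/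
open Matrix

local notation "⟪" x ", " y "⟫" => @inner ℂ _ _ x y

/-- Reduction of finding Alice's measurement to flattening the overlap matrix: if `U` is
a unitary such that `U * (Mφᴴ * Mψ) * Uᴴ` has zero diagonal, then the rows of `U` form an
orthonormal basis of `ℂ^dA` in which all pairs of conditional states are orthogonal. -/
theorem rows_of_flattening_unitary_give_orthogonal_condStates
    (dA dB : ℕ) (hdA : 1 ≤ dA) (hdB : 1 ≤ dB)
    (ψ φ : EuclideanSpace ℂ (Fin dA × Fin dB))
    (Mψ Mφ : Matrix (Fin dB) (Fin dA) ℂ)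
    (hMψ : ∀ (j : Fin dB) (a : Fin dA), Mψ j a = ψ (a, j))
    (hMφ : ∀ (j : Fin dB) (a : Fin dA), Mφ j a = φ (a, j))
    (U : Matrix (Fin dA) (Fin dA) ℂ) (hU : U ∈ Matrix.unitaryGroup (Fin dA) ℂ)
    (hdiag : ∀ i : Fin dA, (U * (Mφᴴ * Mψ) * Uᴴ) i i = 0)
    (w : Fin dA → EuclideanSpace ℂ (Fin dA))
    (hw : ∀ (i : Fin dA) (a : Fin dA), w i a = U i a) :
    (∃ b : OrthonormalBasis (Fin dA) ℂ (EuclideanSpace ℂ (Fin dA)), ⇑b = w) ∧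
    ∀ i : Fin dA, ⟪condState φ (w i), condState ψ (w i)⟫ = 0 := by
  have hUU : U * Uᴴ = 1 := Matrix.mem_unitaryGroup_iff.mp hU
  have hon : Orthonormal ℂ w := by
    rw [orthonormal_iff_ite]
    intro i k
    have h1 : (U * Uᴴ) i k = if i = k then 1 else 0 := by
      rw [hUU]; simp [Matrix.one_apply]
    simp only [Matrix.mul_apply, Matrix.conjTranspose_apply] at h1
    simp only [PiLp.inner_apply, RCLike.inner_apply, hw]
    rw [show (if i = k then (1:ℂ) else 0) = (starRingEnd ℂ) (if i = k then 1 else 0) by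
      split <;> simp, ← h1, map_sum]
    refine Finset.sum_congr rfl fun a _ => ?_
    simp only [starRingEnd_apply, star_mul', star_star]
    exact mul_comm _ _
  haveI : Nonempty (Fin dA) := ⟨⟨0, hdA⟩⟩
  have card_eq : Fintype.card (Fin dA) = Module.finrank ℂ (EuclideanSpace ℂ (Fin dA)) := by
    simp
  refine ⟨⟨(basisOfOrthonormalOfCardEqFinrank hon card_eq).toOrthonormalBasis
      (by rwa [coe_basisOfOrthonormalOfCardEqFinrank]), by simp⟩, ?_⟩
  intro i
  have key := hdiag i
  simp only [Matrix.mul_apply, Matrix.conjTranspose_apply, hMψ, hMφ,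
    Finset.sum_mul, Finset.mul_sum] at key
  simp only [PiLp.inner_apply, RCLike.inner_apply, condState, map_sum,
    Finset.sum_mul, Finset.mul_sum]
  conv_lhs => enter [2, j]; rw [Finset.sum_comm]
  rw [← key, Finset.sum_comm]
  refine Finset.sum_congr rfl fun b _ => ?_
  rw [Finset.sum_comm]
  refine Finset.sum_congr rfl fun a _ => ?_
  refine Finset.sum_congr rfl fun j _ => ?_
  simp only [hw, starRingEnd_apply, star_mul', star_star]
  ring
end

section
/- Let M ∈ Matrix (Fin 2) (Fin 2) ℂ have trace zero, let λ ∈ ℂ with λ ≠ 0, and let w₀, w₁ : EuclideanSpace ℂ (Fin 2) be unit vectors with M.mulVec w₀ = λ • w₀ and M.mulVec w₁ = (−λ) • w₁. Let θ ∈ ℝ satisfy ⟪w₁, w₀⟫ = Complex.exp (θ * Complex.I) * |⟪w₁, w₀⟫|. Define x₊ := Complex.exp (−θ * Complex.I) • w₀ + w₁ and x₋ := Complex.exp (−θ * Complex.I) • w₀ − w₁. Then x₊ ≠ 0, x₋ ≠ 0, ⟪x₊, x₋⟫ = 0, ⟪x₊, M.mulVec x₊⟫ = 0, and ⟪x₋,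 M.mulVec x₋⟫ = 0. -/
open Matrix

local notation "⟪" x ", " y "⟫" => @inner ℂ _ _ x y

/-- Core computation of the 2×2 flattening algorithm: for a traceless 2×2 matrix with
nonzero eigenvalue `λ` and unit eigenvectors `w₀, w₁` (for eigenvalues `λ, -λ`), the
vectors `xp = e^{-iθ} w₀ + w₁` and `xm = e^{-iθ} w₀ - w₁` (with `θ` the phase of
`⟪w₁, w₀⟫`) are nonzero, mutually orthogonal, and both have vanishing numerical value
`⟪x, M x⟫ = 0`. -/
theorem flattening_eigenvector_combination
    (M : Matrix (Fin 2) (Fin 2) ℂ) (hM : M.trace = 0)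
    (lam : ℂ) (hlam : lam ≠ 0)
    (w₀ w₁ : EuclideanSpace ℂ (Fin 2)) (hw₀ : ‖w₀‖ = 1) (hw₁ : ‖w₁‖ = 1)
    (heig₀ : M.mulVec w₀ = lam • (w₀ : Fin 2 → ℂ))
    (heig₁ : M.mulVec w₁ = (-lam) • (w₁ : Fin 2 → ℂ))
    (θ : ℝ)
    (hθ : ⟪w₁, w₀⟫ = Complex.exp ((θ : ℂ) * Complex.I) * ((‖⟪w₁, w₀⟫‖ : ℝ) : ℂ))
    (xp xm : EuclideanSpace ℂ (Fin 2))
    (hxp : xp = Complex.exp ((-θ : ℂ) * Complex.I) • w₀ + w₁)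
    (hxm : xm = Complex.exp ((-θ : ℂ) * Complex.I) • w₀ - w₁) :
    xp ≠ 0 ∧ xm ≠ 0 ∧ ⟪xp, xm⟫ = 0 ∧
      ⟪xp, (WithLp.toLp 2 (M.mulVec xp) : EuclideanSpace ℂ (Fin 2))⟫ = 0 ∧
      ⟪xm, (WithLp.toLp 2 (M.mulVec xm) : EuclideanSpace ℂ (Fin 2))⟫ = 0 := by
  set c := Complex.exp ((-θ : ℂ) * Complex.I) with hc
  have hcc : (starRingEnd ℂ) c = Complex.exp ((θ : ℂ) * Complex.I) := by
    rw [hc, ← Complex.exp_conj]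
    congr 1
    simp
  have hmul : (starRingEnd ℂ) c * c = 1 := by
    rw [hcc, hc, ← Complex.exp_add]
    ring_nf
    exact Complex.exp_zero
  have h00 : ⟪w₀, w₀⟫ = 1 := by
    rw [inner_self_eq_norm_sq_to_K, hw₀]; norm_num
  have h11 : ⟪w₁, w₁⟫ = 1 := by
    rw [inner_self_eq_norm_sq_to_K, hw₁]; norm_num
  set r : ℂ := ((‖⟪w₁, w₀⟫‖ : ℝ) : ℂ) with hr
  have h10 : c * ⟪w₁, w₀⟫ = r := by
    rw [hθ, hc, ← mul_assoc, ← Complex.exp_add]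
    ring_nf
    simp
  have h01 : (starRingEnd ℂ) c * ⟪w₀, w₁⟫ = r := by
    rw [← inner_conj_symm w₀ w₁, ← _root_.map_mul, h10, hr, Complex.conj_ofReal]
  -- nonzero part
  have hw₀ne : (w₀ : Fin 2 → ℂ) ≠ 0 := by
    intro h
    have : w₀ = 0 := WithLp.ofLp_injective 2 h
    rw [this] at hw₀; simp at hw₀
  have hgen : ∀ s : ℂ, (w₁ : Fin 2 → ℂ) ≠ s • (w₀ : Fin 2 → ℂ) := by
    intro s hs
    have h1 : M.mulVec w₁ = s • M.mulVec w₀ := by rw [hs, mulVec_smul]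
    rw [heig₀, heig₁, hs] at h1
    rw [smul_smul, smul_smul] at h1
    have h2 : (-lam * s - s * lam) • (w₀ : Fin 2 → ℂ) = 0 := by
      rw [sub_smul, h1, sub_self]
    rcases smul_eq_zero.mp h2 with h3 | h3
    · have hs0 : s = 0 := by
        have : (-2 : ℂ) * lam * s = 0 := by linear_combination h3
        rcases mul_eq_zero.mp this with h4 | h4
        · rcases mul_eq_zero.mp h4 with h5 | h5
          · norm_num at h5
          · exact absurd h5 hlam
        · exact h4
      rw [hs0, zero_smul] at hs
      have : w₁ = 0 := WithLp.ofLp_injective 2 hs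
      rw [this] at hw₁; simp at hw₁
    · exact hw₀ne h3
  have hxpne : xp ≠ 0 := by
    intro h
    rw [h] at hxp
    have h2 : w₁ = -(c • w₀) := by
      have h3 := hxp.symm
      rw [add_comm] at h3
      exact eq_neg_of_add_eq_zero_left h3
    exact hgen (-c) (by rw [neg_smul, h2]; simp)
  have hxmne : xm ≠ 0 := by
    intro h
    rw [h] at hxm
    exact hgen c (by rw [(sub_eq_zero.mp hxm.symm).symm]; simp)
  -- mulVec computations
  have hxp' : (xp : Fin 2 → ℂ) = c • (w₀ : Fin 2 → ℂ) + (w₁ : Fin 2 → ℂ) := by rw [hxp]; simp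
  have hxm' : (xm : Fin 2 → ℂ) = c • (w₀ : Fin 2 → ℂ) - (w₁ : Fin 2 → ℂ) := by rw [hxm]; simp
  have hMxp : (WithLp.toLp 2 (M.mulVec xp) : EuclideanSpace ℂ (Fin 2)) = (c * lam) • w₀ + (-lam) • w₁ := by
    apply WithLp.ofLp_injective
    simp only [WithLp.ofLp_toLp, WithLp.ofLp_add, WithLp.ofLp_smul]
    rw [hxp', mulVec_add, mulVec_smul, heig₀, heig₁, smul_smul]
  have hMxm : (WithLp.toLp 2 (M.mulVec xm) : EuclideanSpace ℂ (Fin 2)) = (c * lam) • w₀ - (-lam) • w₁ := by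
    apply WithLp.ofLp_injective
    simp only [WithLp.ofLp_toLp, WithLp.ofLp_sub, WithLp.ofLp_smul]
    rw [hxm', mulVec_sub, mulVec_smul, heig₀, heig₁, smul_smul]
  refine ⟨hxpne, hxmne, ?_, ?_, ?_⟩
  · rw [hxp, hxm]
    simp only [inner_add_left, inner_sub_right, inner_smul_left, inner_smul_right]
    linear_combination ((starRingEnd ℂ) c * c) * h00 + hmul - h11 + h10 - h01
  · rw [hMxp, hxp]
    simp only [inner_add_left, inner_add_right, inner_smul_left, inner_smul_right]
    linear_combination (lam * (starRingEnd ℂ) c * c) * h00 - lam * h11 + lam * h10 - lam * h01 + lam * hmul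
  · rw [hMxm, hxm]
    simp only [inner_sub_left, inner_sub_right, inner_smul_left, inner_smul_right]
    linear_combination (lam * (starRingEnd ℂ) c * c) * h00 - lam * h11 - lam * h10 + lam * h01 + lam * hmul
end

section
/- Let d ≥ 1 and let M ∈ Matrix (Fin d) (Fin d) ℂ. Then there exists a unitary matrix U ∈ Matrix.unitaryGroup (Fin d) ℂ such that for every i : Fin d, (Uᴴ * M * U) i i = (trace M) / d. -/
open Matrix Complex

namespace Flatten

variable {n : ℕ}

/-- The quadratic form and basic facts. -/
lemma dot_self_eq (x : Fin n → ℂ) :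
    star x ⬝ᵥ x = ((∑ i, Complex.normSq (x i) : ℝ) : ℂ) := by
  simp [dotProduct, Complex.normSq_eq_conj_mul_self]

lemma quad_expand (A : Matrix (Fin n) (Fin n) ℂ) (a b : ℂ) (x y : Fin n → ℂ) :
    star (a • x + b • y) ⬝ᵥ A *ᵥ (a • x + b • y)
      = (starRingEnd ℂ a) * a * (star x ⬝ᵥ A *ᵥ x)
        + (starRingEnd ℂ a) * b * (star x ⬝ᵥ A *ᵥ y)
        + (starRingEnd ℂ b) * a * (star y ⬝ᵥ A *ᵥ x)
        + (starRingEnd ℂ b) * b * (star y ⬝ᵥ A *ᵥ y) := by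
  simp [star_add, star_smul, mulVec_add, mulVec_smul, add_dotProduct, smul_dotProduct,
    dotProduct_add, dotProduct_smul, smul_eq_mul]
  ring

lemma dot_expand (a b : ℂ) (x y : Fin n → ℂ) :
    star (a • x + b • y) ⬝ᵥ (a • x + b • y)
      = (starRingEnd ℂ a) * a * (star x ⬝ᵥ x)
        + (starRingEnd ℂ a) * b * (star x ⬝ᵥ y)
        + (starRingEnd ℂ b) * a * (star y ⬝ᵥ x)
        + (starRingEnd ℂ b) * b * (star y ⬝ᵥ y) := by
  simp [star_add, star_smul, add_dotProduct, smul_dotProduct,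
    dotProduct_add, dotProduct_smul, smul_eq_mul]
  ring

lemma conj_dot (x y : Fin n → ℂ) :
    starRingEnd ℂ (star x ⬝ᵥ y) = star y ⬝ᵥ x := by
  simp [dotProduct, map_sum, mul_comm]

end Flatten

namespace Flatten

variable {n : ℕ}

lemma quad_smul (A : Matrix (Fin n) (Fin n) ℂ) (c : ℂ) (x : Fin n → ℂ) :
    star (c • x) ⬝ᵥ A *ᵥ (c • x) = (starRingEnd ℂ c) * c * (star x ⬝ᵥ A *ᵥ x) := by
  simp [star_smul, mulVec_smul, smul_dotProduct, dotProduct_smul, smul_eq_mul]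
  ring

set_option maxHeartbeats 1000000 in
lemma key (A : Matrix (Fin n) (Fin n) ℂ) (x y : Fin n → ℂ)
    (hx : star x ⬝ᵥ x = 1) (hy : star y ⬝ᵥ y = 1)
    (hqx : star x ⬝ᵥ A *ᵥ x = 0) (hqy : star y ⬝ᵥ A *ᵥ y = 1)
    (t : ℝ) (ht : t ∈ Set.Icc (0:ℝ) 1) :
    ∃ z : Fin n → ℂ, star z ⬝ᵥ z = 1 ∧ star z ⬝ᵥ A *ᵥ z = (t : ℂ) := by
  set p := star x ⬝ᵥ A *ᵥ y with hp
  set r := star y ⬝ᵥ A *ᵥ x with hr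
  set g := star x ⬝ᵥ y with hg
  set a := (p + r).im with ha
  set b := (p - r).re with hb
  set m := Real.sqrt (a ^ 2 + b ^ 2) with hm
  set e : ℂ := if m = 0 then 1 else ⟨b / m, -(a / m)⟩ with he
  have he1 : (starRingEnd ℂ e) * e = 1 := by
    rw [he]
    split_ifs with h
    · simp
    · have hm2 : m ^ 2 = a ^ 2 + b ^ 2 := Real.sq_sqrt (by positivity)
      have hns : Complex.normSq ⟨b / m, -(a / m)⟩ = 1 := by
        simp only [Complex.normSq_mk]
        field_simp
        nlinarith [hm2]
      rw [← Complex.normSq_eq_conj_mul_self, hns, Complex.ofReal_one]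
  have him : (e * p + (starRingEnd ℂ e) * r).im = 0 := by
    have hre : (e * p + (starRingEnd ℂ e) * r).im = e.re * a + e.im * b := by
      simp [Complex.add_im, Complex.mul_im, ha, hb, Complex.conj_re, Complex.conj_im]
      ring
    rw [hre, he]
    split_ifs with h
    · have h0 : a ^ 2 + b ^ 2 = 0 := (Real.sqrt_eq_zero (by positivity)).mp h
      have ha0 : a = 0 := by nlinarith
      have hb0 : b = 0 := by nlinarith
      simp [ha0, hb0]
    · show b / m * a + -(a / m) * b = 0
      ring
  set c₀ := (e * p + (starRingEnd ℂ e) * r).re with hc0def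
  have hc0 : e * p + (starRingEnd ℂ e) * r = (c₀ : ℂ) := Complex.ext rfl him
  set d₀ : ℝ := 2 * (e * g).re with hd0def
  have hd0 : e * g + (starRingEnd ℂ e) * (starRingEnd ℂ g) = (d₀ : ℂ) := by
    rw [← _root_.map_mul, hd0def]
    push_cast
    rw [Complex.add_conj]
    push_cast
    ring
  set zf : ℝ → (Fin n → ℂ) := fun s => ((1 - s : ℝ) : ℂ) • x + (((s : ℝ) : ℂ) * e) • y
    with hzf
  set Qr : ℝ → ℝ := fun s => s ^ 2 + s * (1 - s) * c₀ with hQr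
  set Nr : ℝ → ℝ := fun s => (1 - s) ^ 2 + s ^ 2 + s * (1 - s) * d₀ with hNr
  have hQ : ∀ s : ℝ, star (zf s) ⬝ᵥ A *ᵥ zf s = ((Qr s : ℝ) : ℂ) := by
    intro s
    rw [hzf]
    rw [quad_expand, hqx, hqy, ← hp, ← hr]
    simp only [_root_.map_mul, Complex.conj_ofReal, hQr]
    push_cast
    linear_combination ((s:ℂ) * (1 - s)) * hc0 + (s:ℂ) ^ 2 * he1
  have hNc : ∀ s : ℝ, star (zf s) ⬝ᵥ zf s = ((Nr s : ℝ) : ℂ) := by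
    intro s
    rw [hzf]
    rw [dot_expand, hx, hy, ← hg, ← conj_dot x y, ← hg]
    simp only [_root_.map_mul, Complex.conj_ofReal, hNr]
    push_cast
    linear_combination ((s:ℂ) * (1 - s)) * hd0 + (s:ℂ) ^ 2 * he1
  have hNpos : ∀ s ∈ Set.Icc (0:ℝ) 1, 0 < Nr s := by
    intro s hs
    have hsum : Nr s = ∑ i, Complex.normSq (zf s i) := by
      have := (hNc s).symm.trans (dot_self_eq (zf s))
      exact_mod_cast this
    have hnonneg : 0 ≤ Nr s := by
      rw [hsum]
      exact Finset.sum_nonneg fun i _ => Complex.normSq_nonneg _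
    rcases hnonneg.lt_or_eq with hlt | heq0
    · exact hlt
    · exfalso
      have hz0 : zf s = 0 := by
        funext i
        have hsum0 : ∑ j, Complex.normSq (zf s j) = 0 := by rw [← hsum, ← heq0]
        have := (Finset.sum_eq_zero_iff_of_nonneg
          (fun j _ => Complex.normSq_nonneg (zf s j))).mp hsum0 i (Finset.mem_univ i)
        exact Complex.normSq_eq_zero.mp this
      have heq : ((1 - s : ℝ) : ℂ) • x = (-(((s : ℝ) : ℂ) * e)) • y := by
        rw [neg_smul, eq_neg_iff_add_eq_zero]
        exact hz0
      have h1 : (0 : ℂ) = ((s : ℝ) : ℂ) ^ 2 := by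
        have hq := congrArg (fun v => star v ⬝ᵥ A *ᵥ v) heq
        simp only [quad_smul, hqx, hqy] at hq
        calc (0 : ℂ)
            = (starRingEnd ℂ ((1 - s : ℝ) : ℂ)) * ((1 - s : ℝ) : ℂ) * 0 := by ring
          _ = (starRingEnd ℂ (-(((s : ℝ) : ℂ) * e))) * (-(((s : ℝ) : ℂ) * e)) * 1 := hq
          _ = ((s : ℝ) : ℂ) ^ 2 * ((starRingEnd ℂ e) * e) := by
              simp only [map_neg, _root_.map_mul, Complex.conj_ofReal]; ring
          _ = ((s : ℝ) : ℂ) ^ 2 := by rw [he1, mul_one]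
      have hs0 : s = 0 := by
        have h2 : ((s : ℝ) : ℂ) = 0 := by
          have := h1.symm
          exact pow_eq_zero_iff (two_ne_zero) |>.mp this
        exact_mod_cast h2
      rw [hs0] at heq
      simp at heq
      rw [heq] at hx
      simp [dotProduct] at hx
  have hQcont : Continuous Qr := by rw [hQr]; fun_prop
  have hNcont : Continuous Nr := by rw [hNr]; fun_prop
  set h : ℝ → ℝ := fun s => Qr s / Nr s with hh
  have hcont : ContinuousOn h (Set.Icc (0:ℝ) 1) :=
    (hQcont.continuousOn.div hNcont.continuousOn (fun s hs => (hNpos s hs).ne'))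
  have h0 : h 0 = 0 := by simp [hh, hQr, hNr]
  have h1 : h 1 = 1 := by norm_num [hh, hQr, hNr]
  have hiv := intermediate_value_Icc (by norm_num : (0:ℝ) ≤ 1) hcont
  rw [h0, h1] at hiv
  obtain ⟨s₀, hs₀mem, hs₀⟩ := hiv ht
  set N := Nr s₀ with hN
  have hNp : 0 < N := hNpos s₀ hs₀mem
  set c : ℝ := (Real.sqrt N)⁻¹ with hc
  have hc2 : c ^ 2 = N⁻¹ := by
    rw [hc, ← Real.sqrt_inv, Real.sq_sqrt (inv_nonneg.mpr hNp.le)]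
  refine ⟨((c : ℝ) : ℂ) • zf s₀, ?_, ?_⟩
  · have hd : star (((c : ℝ) : ℂ) • zf s₀) ⬝ᵥ (((c : ℝ) : ℂ) • zf s₀)
        = (starRingEnd ℂ ((c : ℝ) : ℂ)) * ((c : ℝ) : ℂ) * (star (zf s₀) ⬝ᵥ zf s₀) := by
      simp [star_smul, smul_dotProduct, dotProduct_smul, smul_eq_mul]
      ring
    rw [hd, hNc, Complex.conj_ofReal, ← hN]
    rw [show ((c:ℂ) * (c:ℂ) * (N:ℂ)) = (((c^2 * N : ℝ)) : ℂ) by push_cast; ring]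
    rw [hc2, inv_mul_cancel₀ hNp.ne']
    norm_num
  · rw [quad_smul, hQ, Complex.conj_ofReal]
    rw [show ((c:ℂ) * (c:ℂ) * ((Qr s₀ : ℝ):ℂ)) = (((c^2 * Qr s₀ : ℝ)) : ℂ) by push_cast; ring]
    rw [hc2]
    norm_cast
    rw [← hs₀, hh]
    rw [inv_mul_eq_div]

end Flatten

namespace Flatten

variable {n : ℕ}

lemma numRange_convex (A : Matrix (Fin n) (Fin n) ℂ) :
    Convex ℝ {w : ℂ | ∃ x, star x ⬝ᵥ x = 1 ∧ star x ⬝ᵥ A *ᵥ x = w} := by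
  intro α hα β hβ ta tb hta htb hsum
  obtain ⟨x, hx, hqx⟩ := hα
  obtain ⟨y, hy, hqy⟩ := hβ
  by_cases hab : α = β
  · subst hab
    refine ⟨x, hx, ?_⟩
    rw [hqx, ← add_smul, hsum, one_smul]
  · set A' := ((β - α)⁻¹) • (A - α • (1 : Matrix (Fin n) (Fin n) ℂ)) with hA'
    have hq' : ∀ z : Fin n → ℂ,
        star z ⬝ᵥ A' *ᵥ z = (β - α)⁻¹ * (star z ⬝ᵥ A *ᵥ z - α * (star z ⬝ᵥ z)) := by
      intro z
      rw [hA']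
      rw [smul_mulVec, sub_mulVec, smul_mulVec, one_mulVec]
      rw [dotProduct_smul, dotProduct_sub, dotProduct_smul]
      simp [smul_eq_mul]
    have hba : (β - α) ≠ 0 := sub_ne_zero.mpr (Ne.symm hab)
    have hq'x : star x ⬝ᵥ A' *ᵥ x = 0 := by rw [hq', hqx, hx, mul_one, sub_self, mul_zero]
    have hq'y : star y ⬝ᵥ A' *ᵥ y = 1 := by
      rw [hq', hqy, hy, mul_one, inv_mul_cancel₀ hba]
    have htb1 : tb ∈ Set.Icc (0:ℝ) 1 := ⟨htb, by linarith⟩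
    obtain ⟨z, hz, hqz⟩ := key A' x y hx hy hq'x hq'y tb htb1
    refine ⟨z, hz, ?_⟩
    rw [hq', hz, mul_one] at hqz
    have hmul := congrArg (fun w => (β - α) * w) hqz
    simp only [← mul_assoc, mul_inv_cancel₀ hba, one_mul] at hmul
    have hsumC : ((ta : ℂ) + (tb : ℂ)) = 1 := by exact_mod_cast congrArg (Complex.ofReal) hsum
    have : star z ⬝ᵥ A *ᵥ z = (ta : ℂ) * α + (tb : ℂ) * β := by
      linear_combination hmul - α * hsumC
    rw [this]
    simp [Complex.real_smul]

lemma exists_unit_quad_zero (hn : 1 ≤ n) (A : Matrix (Fin n) (Fin n) ℂ)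
    (htr : A.trace = 0) :
    ∃ x : Fin n → ℂ, star x ⬝ᵥ x = 1 ∧ star x ⬝ᵥ A *ᵥ x = 0 := by
  set S := {w : ℂ | ∃ x, star x ⬝ᵥ x = 1 ∧ star x ⬝ᵥ A *ᵥ x = w} with hS
  have hconv : Convex ℝ S := numRange_convex A
  have hdiag : ∀ i : Fin n, A i i ∈ S := by
    intro i
    refine ⟨Pi.single i 1, ?_, ?_⟩
    · simp [dotProduct, Pi.single_apply, apply_ite]
    · simp [dotProduct, mulVec, Pi.single_apply, Finset.mul_sum, apply_ite]
  have hmem : (0 : ℂ) ∈ S := by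
    have hzero : (0 : ℂ) = ∑ i : Fin n, ((n : ℝ)⁻¹) • A i i := by
      rw [← Finset.smul_sum]
      have : ∑ i : Fin n, A i i = 0 := by
        rw [← htr]; simp [Matrix.trace, Matrix.diag]
      rw [this, smul_zero]
    rw [hzero]
    refine hconv.sum_mem (fun i _ => by positivity) ?_ (fun i _ => hdiag i)
    rw [Finset.sum_const]
    simp only [Finset.card_univ, Fintype.card_fin, nsmul_eq_mul]
    field_simp
  exact hmem

lemma diag_conj (A U : Matrix (Fin n) (Fin n) ℂ) (i : Fin n) :
    (Uᴴ * A * U) i i = star (fun j => U j i) ⬝ᵥ A *ᵥ (fun j => U j i) := by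
  simp only [Matrix.mul_apply, conjTranspose_apply, dotProduct, mulVec, Pi.star_apply,
    Finset.sum_mul, Finset.mul_sum]
  rw [Finset.sum_comm]
  refine Finset.sum_congr rfl fun j _ => Finset.sum_congr rfl fun k _ => ?_
  simp [RCLike.star_def]
  ring

lemma exists_unitary_column (x : Fin n → ℂ) (hx : star x ⬝ᵥ x = 1) (i₀ : Fin n) :
    ∃ U ∈ Matrix.unitaryGroup (Fin n) ℂ, ∀ j, U j i₀ = x j := by
  set v : EuclideanSpace ℂ (Fin n) := WithLp.toLp 2 x with hv
  have hcard : Module.finrank ℂ (EuclideanSpace ℂ (Fin n)) = Fintype.card (Fin n) := by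
    simp [finrank_euclideanSpace]
  have horth : Orthonormal ℂ (Set.restrict {i₀} (fun _ : Fin n => v)) := by
    rw [orthonormal_iff_ite]
    rintro ⟨i, hi⟩ ⟨j, hj⟩
    simp only [Set.mem_singleton_iff] at hi hj
    subst hi; subst hj
    simp only [Set.restrict_apply, if_pos rfl]
    have : (inner ℂ v v : ℂ) = star x ⬝ᵥ x := by
      simp only [hv, PiLp.inner_apply, RCLike.inner_apply, WithLp.ofLp_toLp, dotProduct,
        Pi.star_apply, RCLike.star_def, mul_comm]
    show inner ℂ v v = _
    rw [this, hx]
    simp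
  obtain ⟨b, hb⟩ := horth.exists_orthonormalBasis_extension_of_card_eq hcard
  refine ⟨Matrix.of (fun j i => (b i : Fin n → ℂ) j), ?_, ?_⟩
  · rw [Matrix.mem_unitaryGroup_iff']
    ext i i'
    have hinner : (inner ℂ (b i) (b i') : ℂ) = if i = i' then 1 else 0 :=
      orthonormal_iff_ite.mp b.orthonormal i i'
    have : (star (Matrix.of (fun j i => (b i : Fin n → ℂ) j)) *
        Matrix.of (fun j i => (b i : Fin n → ℂ) j)) i i' = (inner ℂ (b i) (b i') : ℂ) := by
      simp [Matrix.mul_apply, Matrix.star_apply, PiLp.inner_apply, RCLike.inner_apply,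
        Matrix.of_apply, mul_comm]
    rw [this, hinner, Matrix.one_apply]
  · intro j
    simp only [Matrix.of_apply]
    rw [hb i₀ rfl]

end Flatten

namespace Flatten

lemma flat : ∀ (n : ℕ) (A : Matrix (Fin n) (Fin n) ℂ), A.trace = 0 →
    ∃ U ∈ Matrix.unitaryGroup (Fin n) ℂ, ∀ i, (Uᴴ * A * U) i i = 0 := by
  intro n
  induction n with
  | zero =>
    intro A _
    exact ⟨1, Submonoid.one_mem _, fun i => i.elim0⟩
  | succ n ih =>
    intro A htr
    obtain ⟨x, hx, hqx⟩ := exists_unit_quad_zero (Nat.succ_le_succ (Nat.zero_le n)) A htr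
    obtain ⟨U₀, hU₀, hcol⟩ := exists_unitary_column x hx 0
    set B := U₀ᴴ * A * U₀ with hB
    have hB00 : B 0 0 = 0 := by
      rw [hB, diag_conj]
      have : (fun j => U₀ j 0) = x := funext hcol
      rw [this, hqx]
    have htrB : B.trace = 0 := by
      have h1 : U₀ * U₀ᴴ = 1 := by
        rw [← Matrix.star_eq_conjTranspose]
        exact (Matrix.mem_unitaryGroup_iff.mp hU₀)
      rw [hB, Matrix.trace_mul_cycle, h1, Matrix.one_mul, htr]
    set C := B.submatrix Fin.succ Fin.succ with hC
    have htrC : C.trace = 0 := by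
      have hsplit : B.trace = B 0 0 + C.trace := by
        simp [Matrix.trace, Matrix.diag, Fin.sum_univ_succ, hC]
      rw [hsplit, hB00, zero_add] at htrB
      exact htrB
    obtain ⟨V, hV, hVd⟩ := ih C htrC
    set W : Matrix (Fin (n+1)) (Fin (n+1)) ℂ := Matrix.of
      (fun i j : Fin (n+1) =>
        Fin.cases (Fin.cases (1:ℂ) (fun _ => 0) j)
          (fun i' => Fin.cases (0:ℂ) (fun j' => V i' j') j) i) with hW
    have hW00 : W 0 0 = 1 := rfl
    have hW0s : ∀ j : Fin n, W 0 j.succ = 0 := fun j => rfl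
    have hWs0 : ∀ i : Fin n, W i.succ 0 = 0 := fun i => rfl
    have hWss : ∀ i j : Fin n, W i.succ j.succ = V i j := fun i j => rfl
    have hWu : W ∈ Matrix.unitaryGroup (Fin (n+1)) ℂ := by
      rw [Matrix.mem_unitaryGroup_iff']
      have hVu : star V * V = 1 := Matrix.mem_unitaryGroup_iff'.mp hV
      ext i j
      rw [Matrix.mul_apply]
      rw [Fin.sum_univ_succ]
      simp only [Matrix.star_apply]
      induction i using Fin.cases with
      | zero =>
        induction j using Fin.cases with
        | zero =>
          simp [hW00, hWs0, Matrix.one_apply]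
        | succ j' =>
          simp [hW00, hW0s, hWs0, Matrix.one_apply, (Fin.succ_ne_zero j').symm]
      | succ i' =>
        induction j using Fin.cases with
        | zero =>
          simp [hW00, hW0s, hWs0, Matrix.one_apply, Fin.succ_ne_zero i']
        | succ j' =>
          have hv := congrFun (congrFun hVu i') j'
          rw [Matrix.mul_apply] at hv
          simp only [Matrix.star_apply] at hv
          simp only [hW0s, hWss, star_zero, zero_mul, zero_add]
          rw [hv, Matrix.one_apply, Matrix.one_apply]
          simp [Fin.succ_inj]
    refine ⟨U₀ * W, Submonoid.mul_mem _ hU₀ hWu, ?_⟩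
    have hconj : (U₀ * W)ᴴ * A * (U₀ * W) = Wᴴ * B * W := by
      rw [Matrix.conjTranspose_mul, hB]
      noncomm_ring
    intro i
    rw [hconj]
    induction i using Fin.cases with
    | zero =>
      rw [Matrix.mul_apply]
      rw [Fin.sum_univ_succ]
      simp only [hWs0, mul_zero, Finset.sum_const_zero, add_zero, hW00, mul_one]
      rw [Matrix.mul_apply, Fin.sum_univ_succ]
      simp only [Matrix.conjTranspose_apply, hW00, hWs0, star_one, one_mul, star_zero,
        zero_mul, Finset.sum_const_zero, add_zero]
      exact hB00
    | succ i' =>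
      have hgoal : (Wᴴ * B * W) i'.succ i'.succ = (Vᴴ * C * V) i' i' := by
        rw [Matrix.mul_apply, Matrix.mul_apply]
        rw [Fin.sum_univ_succ]
        simp only [hWs0, hW0s, mul_zero, zero_mul, Finset.sum_const_zero, add_zero,
          zero_add, hWss]
        refine Finset.sum_congr rfl fun k _ => ?_
        congr 1
        rw [Matrix.mul_apply, Matrix.mul_apply, Fin.sum_univ_succ]
        simp only [Matrix.conjTranspose_apply, hW0s, star_zero, zero_mul, zero_add, hWss,
          hC, Matrix.submatrix_apply]
      rw [hgoal]
      exact hVd i'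

end Flatten

/-- Correctness of the general flattening algorithm: every `d × d` complex matrix can be
unitarily conjugated so that every diagonal entry equals `(trace M) / d`. -/
theorem exists_unitary_flattening (d : ℕ) (hd : 1 ≤ d) (M : Matrix (Fin d) (Fin d) ℂ) :
    ∃ U : Matrix (Fin d) (Fin d) ℂ, U ∈ Matrix.unitaryGroup (Fin d) ℂ ∧
      ∀ i : Fin d, (Uᴴ * M * U) i i = M.trace / (d : ℂ) := by
  set c : ℂ := M.trace / (d : ℂ) with hc
  have hdne : (d : ℂ) ≠ 0 := by
    exact_mod_cast Nat.cast_ne_zero.mpr (by omega)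
  set A := M - c • (1 : Matrix (Fin d) (Fin d) ℂ) with hA
  have htrA : A.trace = 0 := by
    rw [hA, Matrix.trace_sub, Matrix.trace_smul, Matrix.trace_one]
    simp only [Fintype.card_fin, smul_eq_mul, hc]
    field_simp
    simp
  obtain ⟨U, hU, hdiag⟩ := Flatten.flat d A htrA
  refine ⟨U, hU, fun i => ?_⟩
  have hM : M = A + c • 1 := by rw [hA]; abel
  have hUU : Uᴴ * U = 1 := by
    rw [← Matrix.star_eq_conjTranspose]
    exact Matrix.mem_unitaryGroup_iff'.mp hU
  have hexp : Uᴴ * M * U = Uᴴ * A * U + c • 1 := by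
    rw [hM, Matrix.mul_add, Matrix.add_mul]
    congr 1
    rw [Matrix.mul_smul, Matrix.smul_mul, Matrix.mul_one, hUU]
  rw [hexp]
  simp [hdiag i, Matrix.one_apply]
end

section
/- Let m ≥ 1 and let M ∈ Matrix (Fin m × Fin 2) (Fin m × Fin 2) ℂ. Then there exists a unitary matrix U ∈ Matrix.unitaryGroup (Fin m × Fin 2) ℂ that is block-diagonal with respect to the pairing, i.e., U (a, s) (b, t) = 0 whenever a ≠ b, such that for every a : Fin m, (Uᴴ * M * U) (a, 0) (a, 0) = (Uᴴ * M * U) (a, 1) (a, 1) = (M (a, 0) (a, 0) + M (a, 1) (a, 1)) / 2. -/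
open Matrix

lemma exists_phase_s12 (z : ℂ) : ∃ w : ℂ, w * (starRingEnd ℂ) w = 1 ∧ (w * z).im = 0 := by
  by_cases hz : z = 0
  · exact ⟨1, by simp, by simp [hz]⟩
  · have habs : (‖z‖ : ℝ) ≠ 0 := norm_ne_zero_iff.mpr hz
    refine ⟨(starRingEnd ℂ) z / ((‖z‖ : ℝ) : ℂ), ?_, ?_⟩
    · rw [map_div₀, Complex.conj_conj, Complex.conj_ofReal, div_mul_div_comm]
      rw [mul_comm ((starRingEnd ℂ) z) z, Complex.mul_conj]
      norm_cast
      rw [Complex.normSq_eq_norm_sq, sq, div_self (by positivity)]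
    · rw [div_mul_eq_mul_div, mul_comm, Complex.mul_conj]
      simp

lemma exists_cs (k : ℝ) : ∃ c s : ℝ, c ^ 2 + s ^ 2 = 1 ∧ (c ^ 2 - s ^ 2) + 2 * k * (c * s) = 0 := by
  set τ := k + Real.sqrt (k ^ 2 + 1) with hτdef
  have hsq : Real.sqrt (k ^ 2 + 1) ^ 2 = k ^ 2 + 1 := Real.sq_sqrt (by positivity)
  have hτ : τ ^ 2 = 2 * k * τ + 1 := by rw [hτdef]; nlinarith [hsq]
  set ν := Real.sqrt (1 + τ ^ 2) with hνdef
  have hν : ν ^ 2 = 1 + τ ^ 2 := Real.sq_sqrt (by positivity)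
  have hνpos : 0 < ν := Real.sqrt_pos.mpr (by positivity)
  refine ⟨1 / ν, τ / ν, ?_, ?_⟩
  · rw [div_pow, div_pow, ← add_div, hν, one_pow, div_self (by positivity)]
  · field_simp
    nlinarith [hτ]

lemma exists_wk (p q d : ℂ) (hd0 : d ≠ 0) :
    ∃ w : ℂ, ∃ k : ℝ, w * (starRingEnd ℂ) w = 1 ∧
      w * p + (starRingEnd ℂ) w * q = (k : ℂ) * d := by
  obtain ⟨w, hw, hwz⟩ := exists_phase_s12 ((starRingEnd ℂ) d * p - d * (starRingEnd ℂ) q)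
  set E := w * p + (starRingEnd ℂ) w * q with hE
  have hIm : ((starRingEnd ℂ) d * E).im = 0 := by
    have key : (starRingEnd ℂ) d * E
        = w * ((starRingEnd ℂ) d * p - d * (starRingEnd ℂ) q)
          + (w * (d * (starRingEnd ℂ) q)
             + (starRingEnd ℂ) (w * (d * (starRingEnd ℂ) q))) := by
      simp only [hE, _root_.map_mul, map_sub, Complex.conj_conj]
      ring
    rw [key]
    simp only [Complex.add_im, hwz, Complex.conj_im, zero_add]
    ring
  set r := ((starRingEnd ℂ) d * E).re with hr
  have hre : (starRingEnd ℂ) d * E = (r : ℂ) := by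
    apply Complex.ext
    · rw [Complex.ofReal_re]
    · rw [Complex.ofReal_im, hIm]
  have hnsq : (Complex.normSq d : ℂ) ≠ 0 := by simpa using hd0
  refine ⟨w, r / Complex.normSq d, hw, ?_⟩
  have h1 : (Complex.normSq d : ℂ) * E = (r : ℂ) * d := by
    rw [← Complex.mul_conj d]
    calc d * (starRingEnd ℂ) d * E = d * ((starRingEnd ℂ) d * E) := by ring
    _ = d * (r : ℂ) := by rw [hre]
    _ = (r : ℂ) * d := by ring
  have hk' : ((r / Complex.normSq d : ℝ) : ℂ) = (r : ℂ) / (Complex.normSq d : ℂ) := by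
    push_cast; ring
  rw [← hE, hk', div_mul_eq_mul_div, eq_div_iff hnsq]
  linear_combination h1

lemma flatten2 (A : Matrix (Fin 2) (Fin 2) ℂ) :
    ∃ V : Matrix (Fin 2) (Fin 2) ℂ, V ∈ Matrix.unitaryGroup (Fin 2) ℂ ∧
      (Vᴴ * A * V) 0 0 = (A 0 0 + A 1 1) / 2 ∧
      (Vᴴ * A * V) 1 1 = (A 0 0 + A 1 1) / 2 := by
  by_cases hd0 : A 0 0 - A 1 1 = 0
  · have h11 : A 1 1 = A 0 0 := by linear_combination -hd0
    refine ⟨1, one_mem _, ?_, ?_⟩ <;> simp [h11] <;> ring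
  · obtain ⟨w, k, hw, hEk⟩ := exists_wk (A 0 1) (A 1 0) (A 0 0 - A 1 1) hd0
    obtain ⟨c, s, hcs, hk2⟩ := exists_cs k
    have hcsC : (c : ℂ) ^ 2 + (s : ℂ) ^ 2 = 1 := by exact_mod_cast hcs
    have hk2C : ((c : ℂ) ^ 2 - (s : ℂ) ^ 2) + 2 * (k : ℂ) * ((c : ℂ) * (s : ℂ)) = 0 := by
      exact_mod_cast hk2
    refine ⟨!![(c : ℂ), -(s : ℂ) * (starRingEnd ℂ) w; (s : ℂ) * w, (c : ℂ)], ?_, ?_, ?_⟩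
    · rw [Matrix.mem_unitaryGroup_iff']
      ext i j
      fin_cases i <;> fin_cases j <;>
        simp [Matrix.mul_apply, Fin.sum_univ_two, Matrix.conjTranspose_apply,
          Matrix.one_apply, _root_.map_mul, Complex.conj_ofReal] <;>
        first
        | ring1
        | linear_combination ((s:ℂ)^2) * hw + hcsC
        | linear_combination 2*((s:ℂ)^2) * hw + 2*hcsC
        | linear_combination (-(s:ℂ)^2) * hw - hcsC
        | linear_combination (-2*(s:ℂ)^2) * hw - 2*hcsC
    · simp only [Matrix.mul_apply, Fin.sum_univ_two, Matrix.conjTranspose_apply]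
      simp [_root_.map_mul, Complex.conj_ofReal]
      linear_combination ((c:ℂ)*(s:ℂ)) * hEk + (s:ℂ)^2 * A 1 1 * hw +
        ((A 0 0 - A 1 1)/2) * hk2C + (A 0 0 + A 1 1) / 2 * hcsC
    · simp only [Matrix.mul_apply, Fin.sum_univ_two, Matrix.conjTranspose_apply]
      simp [_root_.map_mul, Complex.conj_ofReal]
      linear_combination (-(c:ℂ)*(s:ℂ)) * hEk + (s:ℂ)^2 * A 0 0 * hw +
        (-(A 0 0 - A 1 1)/2) * hk2C + (A 0 0 + A 1 1) / 2 * hcsC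

/-- Single layer of the iterative flattening algorithm: for a matrix indexed by `m`
pairs, there is a block-diagonal unitary (acting within each pair) whose conjugation
makes the two diagonal entries of each pair both equal to their average. -/
theorem exists_blockDiagonal_unitary_flattening_layer (m : ℕ) (hm : 1 ≤ m)
    (M : Matrix (Fin m × Fin 2) (Fin m × Fin 2) ℂ) :
    ∃ U : Matrix (Fin m × Fin 2) (Fin m × Fin 2) ℂ,
      U ∈ Matrix.unitaryGroup (Fin m × Fin 2) ℂ ∧
      (∀ (a b : Fin m) (s t : Fin 2), a ≠ b → U (a, s) (b, t) = 0) ∧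
      (∀ a : Fin m,
        (Uᴴ * M * U) (a, 0) (a, 0) = (M (a, 0) (a, 0) + M (a, 1) (a, 1)) / 2 ∧
        (Uᴴ * M * U) (a, 1) (a, 1) = (M (a, 0) (a, 0) + M (a, 1) (a, 1)) / 2) := by
  have h := fun a : Fin m => flatten2 (Matrix.of fun s t : Fin 2 => M (a, s) (a, t))
  choose V hVu hV0 hV1 using h
  set U : Matrix (Fin m × Fin 2) (Fin m × Fin 2) ℂ :=
    Matrix.of fun x y => if x.1 = y.1 then V x.1 x.2 y.2 else 0 with hU
  have hUapp : ∀ (a b : Fin m) (s t : Fin 2),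
      U (a, s) (b, t) = if a = b then V a s t else 0 := by
    intro a b s t; rfl
  have hblock : ∀ (a : Fin m) (i j : Fin 2),
      (Uᴴ * M * U) (a, i) (a, j)
        = ((V a)ᴴ * Matrix.of (fun s t : Fin 2 => M (a, s) (a, t)) * V a) i j := by
    intro a i j
    simp only [Matrix.mul_apply, Matrix.conjTranspose_apply, Fintype.sum_prod_type,
      hUapp, Matrix.of_apply]
    simp [apply_ite, Finset.mul_sum, Finset.sum_mul]
  refine ⟨U, ?_, ?_, ?_⟩
  · rw [Matrix.mem_unitaryGroup_iff']
    ext ⟨a, i⟩ ⟨b, j⟩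
    rw [Matrix.mul_apply]
    simp only [Matrix.conjTranspose_apply, Fintype.sum_prod_type, hUapp]
    by_cases hab : a = b
    · subst hab
      have hV : (V a)ᴴ * V a = 1 := Matrix.mem_unitaryGroup_iff'.mp (hVu a)
      have h2 := congrFun (congrFun hV i) j
      rw [Matrix.mul_apply] at h2
      simp only [Matrix.conjTranspose_apply, Matrix.one_apply] at h2
      rw [Fin.sum_univ_two] at h2
      simp only [Matrix.star_apply, hUapp]
      simpa [apply_ite (star : ℂ → ℂ), Finset.sum_ite_irrel, Finset.sum_ite_eq',
        Matrix.one_apply, Prod.ext_iff] using h2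
    · simp [hab, Matrix.one_apply, Prod.ext_iff, hUapp, Ne.symm hab]
  · intro a b s t hab
    simp [hUapp, hab]
  · intro a
    constructor
    · rw [hblock a 0 0, hV0 a]
      simp
    · rw [hblock a 1 1, hV1 a]
      simp
end
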